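/- arXiv:0704.2264 — 6 statements merged into one kernel-verified Lean document; each statement's English description precedes it below -/
import Mathlib

section
/- The chromatic polynomial of the graph X(3,3) factors as P(X(3,3), x) = x(x-1)(x-2)(x^8 - 17x^7 + 137x^6 - 677x^5 + 2228x^4 - 4969x^3 + 7284x^2 - 6363x + 2509). -/
/-- The number of proper colorings of `G` with a palette of `k` colors. -/
noncomputable def numColorings {V : Type} [Fintype V] (G : SimpleGraph V) (k : ℕ) : ℕ :=
  Nat.card {f : V → Fin k // ∀ u v, G.Adj u v → f u ≠ f v}

/-- `P` is the chromatic polynomial of `G`: for every natural number `k`, evaluating `P`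
at `k` gives the number of proper `k`-colorings of `G`. -/
def IsChromaticPolynomial {V : Type} [Fintype V] (G : SimpleGraph V) (P : Polynomial ℝ) : Prop :=
  ∀ k : ℕ, P.eval (k : ℝ) = numColorings G k

/-- The adjacency-generating relation of the graph `X(s,t)`: the vertices `v0, v1, v2, v3, v4`
are `Sum.inl 0, …, Sum.inl 4`, the independent set `S` is `Fin s` (as `Sum.inr (Sum.inl _)`)
and the independent set `T` is `Fin t` (as `Sum.inr (Sum.inr _)`).  The edges are: `v1v2`,
`v3v4`, every vertex of `S` joined to each of `v0, v1, v3`, and every vertex of `T` joined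
to each of `v0, v2, v4`. -/
def XAdj (s t : ℕ) (x y : Fin 5 ⊕ Fin s ⊕ Fin t) : Prop :=
  (x = Sum.inl 1 ∧ y = Sum.inl 2) ∨ (x = Sum.inl 3 ∧ y = Sum.inl 4) ∨
    ((∃ i : Fin s, x = Sum.inr (Sum.inl i)) ∧ (y = Sum.inl 0 ∨ y = Sum.inl 1 ∨ y = Sum.inl 3)) ∨
    ((∃ j : Fin t, x = Sum.inr (Sum.inr j)) ∧ (y = Sum.inl 0 ∨ y = Sum.inl 2 ∨ y = Sum.inl 4))

/-- The graph `X(s,t)`. -/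
def graphX (s t : ℕ) : SimpleGraph (Fin 5 ⊕ Fin s ⊕ Fin t) :=
  SimpleGraph.fromRel (XAdj s t)

open Finset

/-! ### Auxiliary sums -/

/-- The basic weight. -/
def ww (k n : ℕ) (a b d : Fin k) : ℝ :=
  (((Finset.univ \ {a, b, d} : Finset (Fin k)).card : ℝ)) ^ n

lemma cast_card_sdiff (k : ℕ) (s : Finset (Fin k)) :
    (((Finset.univ \ s : Finset (Fin k)).card : ℝ)) = (k : ℝ) - s.card := by
  rw [Finset.card_sdiff_of_subset (Finset.subset_univ _), Finset.card_univ, Fintype.card_fin,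
    Nat.cast_sub (by simpa using Finset.card_le_univ s)]

lemma ww_symm (k n : ℕ) (a b d : Fin k) : ww k n a b d = ww k n a d b := by
  unfold ww
  rw [Finset.pair_comm b d]

lemma ww_mul_self (k : ℕ) (a b d : Fin k) : ww k 3 a b d * ww k 3 a b d = ww k 6 a b d := by
  unfold ww
  rw [← pow_add]

lemma ww_self (k n : ℕ) (a : Fin k) : ww k n a a a = ((k : ℝ) - 1) ^ n := by
  unfold ww
  have h : ({a, a, a} : Finset (Fin k)) = {a} := by ext x; simp
  rw [h, cast_card_sdiff, Finset.card_singleton, Nat.cast_one]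

lemma ww_aad (k n : ℕ) {a d : Fin k} (h : d ≠ a) : ww k n a a d = ((k : ℝ) - 2) ^ n := by
  unfold ww
  have hs : ({a, a, d} : Finset (Fin k)) = {a, d} := by ext x; simp
  rw [hs, cast_card_sdiff, Finset.card_pair (Ne.symm h)]
  norm_num

lemma ww_aba (k n : ℕ) {a b : Fin k} (h : b ≠ a) : ww k n a b a = ((k : ℝ) - 2) ^ n := by
  unfold ww
  have hs : ({a, b, a} : Finset (Fin k)) = {a, b} := by ext x; simp; tauto
  rw [hs, cast_card_sdiff, Finset.card_pair (Ne.symm h)]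
  norm_num

lemma ww_abb (k n : ℕ) {a b : Fin k} (h : b ≠ a) : ww k n a b b = ((k : ℝ) - 2) ^ n := by
  unfold ww
  have hs : ({a, b, b} : Finset (Fin k)) = {a, b} := by ext x; simp
  rw [hs, cast_card_sdiff, Finset.card_pair (Ne.symm h)]
  norm_num

lemma ww_three (k n : ℕ) {a b d : Fin k} (h1 : b ≠ a) (h2 : d ≠ a) (h3 : d ≠ b) :
    ww k n a b d = ((k : ℝ) - 3) ^ n := by
  unfold ww
  have hs : ({a, b, d} : Finset (Fin k)).card = 3 := by
    rw [Finset.card_insert_of_notMem (by simp [h1.symm, h2.symm]),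
      Finset.card_pair (Ne.symm h3)]
  rw [cast_card_sdiff, hs]
  norm_num

/-- Value of the inner sum over the third argument. -/
lemma sum_ww (k n : ℕ) (a b : Fin k) :
    ∑ d : Fin k, ww k n a b d =
      if b = a then ((k : ℝ) - 1) ^ n + ((k : ℝ) - 1) * ((k : ℝ) - 2) ^ n
      else 2 * ((k : ℝ) - 2) ^ n + ((k : ℝ) - 2) * ((k : ℝ) - 3) ^ n := by
  split_ifs with h
  · subst h
    rw [Finset.sum_eq_sum_sdiff_singleton_add (Finset.mem_univ b)]
    rw [Finset.sum_congr rfl (fun d hd => ww_aad k n (by simpa using (Finset.mem_sdiff.mp hd).2)),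
      Finset.sum_const, ww_self, nsmul_eq_mul, cast_card_sdiff, Finset.card_singleton]
    push_cast
    ring
  · rw [← Finset.sum_sdiff (Finset.subset_univ ({a, b} : Finset (Fin k)))]
    have hab : a ≠ b := fun hh => h hh.symm
    rw [Finset.sum_pair hab, ww_aba k n h, ww_abb k n h]
    rw [Finset.sum_congr rfl (fun d hd => by
      have hd' := Finset.mem_sdiff.mp hd
      simp only [Finset.mem_insert, Finset.mem_singleton, not_or] at hd'
      exact ww_three k n h hd'.2.1 hd'.2.2)]
    rw [Finset.sum_const, nsmul_eq_mul, cast_card_sdiff, Finset.card_pair hab]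
    push_cast
    ring

lemma sum_ite_const (k : ℕ) (a : Fin k) (X Y : ℝ) :
    ∑ b : Fin k, (if b = a then X else Y) = X + ((k : ℝ) - 1) * Y := by
  rw [Finset.sum_eq_sum_sdiff_singleton_add (Finset.mem_univ a), if_pos rfl]
  rw [Finset.sum_congr rfl (fun b hb => if_neg (by simpa using (Finset.mem_sdiff.mp hb).2)),
    Finset.sum_const, nsmul_eq_mul, cast_card_sdiff, Finset.card_singleton]
  push_cast
  ring

lemma sum_ww2 (k n : ℕ) (a : Fin k) :
    ∑ b : Fin k, ∑ d : Fin k, ww k n a b d =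
      ((k : ℝ) - 1) ^ n + 3 * ((k : ℝ) - 1) * ((k : ℝ) - 2) ^ n
        + ((k : ℝ) - 1) * ((k : ℝ) - 2) * ((k : ℝ) - 3) ^ n := by
  simp_rw [sum_ww]
  rw [sum_ite_const]
  ring

lemma sum_ww_sq (k n : ℕ) (a : Fin k) :
    ∑ b : Fin k, (∑ d : Fin k, ww k n a b d) ^ 2 =
      (((k : ℝ) - 1) ^ n + ((k : ℝ) - 1) * ((k : ℝ) - 2) ^ n) ^ 2
        + ((k : ℝ) - 1) * (2 * ((k : ℝ) - 2) ^ n + ((k : ℝ) - 2) * ((k : ℝ) - 3) ^ n) ^ 2 := by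
  simp_rw [sum_ww, apply_ite (· ^ 2)]
  rw [sum_ite_const]

/-- The main sum computation. -/
lemma big_sum (k : ℕ) :
    (∑ a : Fin k, ∑ b : Fin k, ∑ c : Fin k, ∑ d : Fin k, ∑ e : Fin k,
      (if b ≠ c ∧ d ≠ e then ww k 3 a b d * ww k 3 a c e else 0)) =
    (k : ℝ) * ((((k : ℝ) - 1) ^ 3 + 3 * ((k : ℝ) - 1) * ((k : ℝ) - 2) ^ 3
          + ((k : ℝ) - 1) * ((k : ℝ) - 2) * ((k : ℝ) - 3) ^ 3) ^ 2
      - 2 * ((((k : ℝ) - 1) ^ 3 + ((k : ℝ) - 1) * ((k : ℝ) - 2) ^ 3) ^ 2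
          + ((k : ℝ) - 1) * (2 * ((k : ℝ) - 2) ^ 3 + ((k : ℝ) - 2) * ((k : ℝ) - 3) ^ 3) ^ 2)
      + (((k : ℝ) - 1) ^ 6 + 3 * ((k : ℝ) - 1) * ((k : ℝ) - 2) ^ 6
          + ((k : ℝ) - 1) * ((k : ℝ) - 2) * ((k : ℝ) - 3) ^ 6)) := by
  have step1 : ∀ a b c : Fin k,
      (∑ d : Fin k, ∑ e : Fin k,
        (if b ≠ c ∧ d ≠ e then ww k 3 a b d * ww k 3 a c e else 0)) =
      (if b = c then 0 else
        (∑ d : Fin k, ww k 3 a b d) * (∑ e : Fin k, ww k 3 a c e)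
          - ∑ d : Fin k, ww k 3 a b d * ww k 3 a c d) := by
    intro a b c
    by_cases hbc : b = c
    · simp [hbc]
    · rw [if_neg hbc]
      have pt : ∀ d e : Fin k,
          (if b ≠ c ∧ d ≠ e then ww k 3 a b d * ww k 3 a c e else 0) =
            ww k 3 a b d * ww k 3 a c e
              - (if d = e then ww k 3 a b d * ww k 3 a c e else 0) := by
        intro d e
        by_cases h : d = e <;> simp [h, hbc]
      simp_rw [pt, Finset.sum_sub_distrib]
      congr 1
      · rw [Fintype.sum_mul_sum]
      · exact Finset.sum_congr rfl fun d _ => Fintype.sum_ite_eq d _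
  simp_rw [step1]
  have step2 : ∀ a b : Fin k,
      (∑ c : Fin k, (if b = c then 0 else
        (∑ d : Fin k, ww k 3 a b d) * (∑ e : Fin k, ww k 3 a c e)
          - ∑ d : Fin k, ww k 3 a b d * ww k 3 a c d)) =
      (∑ c : Fin k, ((∑ d : Fin k, ww k 3 a b d) * (∑ e : Fin k, ww k 3 a c e)
          - ∑ d : Fin k, ww k 3 a b d * ww k 3 a c d))
        - ((∑ d : Fin k, ww k 3 a b d) * (∑ e : Fin k, ww k 3 a b e)
            - ∑ d : Fin k, ww k 3 a b d * ww k 3 a b d) := by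
    intro a b
    have pt : ∀ c : Fin k, (if b = c then 0 else
        (∑ d : Fin k, ww k 3 a b d) * (∑ e : Fin k, ww k 3 a c e)
          - ∑ d : Fin k, ww k 3 a b d * ww k 3 a c d) =
        ((∑ d : Fin k, ww k 3 a b d) * (∑ e : Fin k, ww k 3 a c e)
          - ∑ d : Fin k, ww k 3 a b d * ww k 3 a c d)
          - (if b = c then
              ((∑ d : Fin k, ww k 3 a b d) * (∑ e : Fin k, ww k 3 a c e)
                - ∑ d : Fin k, ww k 3 a b d * ww k 3 a c d) else 0) := by
      intro c
      by_cases h : b = c <;> simp [h]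
    simp_rw [pt, Finset.sum_sub_distrib]
    congr 1
    have := Fintype.sum_ite_eq b (fun c : Fin k =>
      ((∑ d : Fin k, ww k 3 a b d) * (∑ e : Fin k, ww k 3 a c e)
        - ∑ d : Fin k, ww k 3 a b d * ww k 3 a c d))
    rw [this]
  simp_rw [step2]
  -- Now compute each of the four pieces for each a.
  have hA : ∀ a : Fin k,
      (∑ b : Fin k, ∑ c : Fin k,
        ((∑ d : Fin k, ww k 3 a b d) * (∑ e : Fin k, ww k 3 a c e)
          - ∑ d : Fin k, ww k 3 a b d * ww k 3 a c d)) =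
      (((k : ℝ) - 1) ^ 3 + 3 * ((k : ℝ) - 1) * ((k : ℝ) - 2) ^ 3
          + ((k : ℝ) - 1) * ((k : ℝ) - 2) * ((k : ℝ) - 3) ^ 3) ^ 2
        - ((((k : ℝ) - 1) ^ 3 + ((k : ℝ) - 1) * ((k : ℝ) - 2) ^ 3) ^ 2
          + ((k : ℝ) - 1) * (2 * ((k : ℝ) - 2) ^ 3 + ((k : ℝ) - 2) * ((k : ℝ) - 3) ^ 3) ^ 2) := by
    intro a
    simp_rw [Finset.sum_sub_distrib]
    congr 1
    · -- product part
      rw [← Fintype.sum_mul_sum (fun b => ∑ d : Fin k, ww k 3 a b d)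
          (fun c => ∑ e : Fin k, ww k 3 a c e)]
      rw [sum_ww2, sq]
    · -- the H-part
      have swap : (∑ b : Fin k, ∑ c : Fin k, ∑ d : Fin k, ww k 3 a b d * ww k 3 a c d)
          = ∑ d : Fin k, (∑ b : Fin k, ww k 3 a b d) * (∑ c : Fin k, ww k 3 a c d) := by
        rw [Finset.sum_congr rfl (fun b _ => Finset.sum_comm), Finset.sum_comm]
        exact Finset.sum_congr rfl fun d _ => (Fintype.sum_mul_sum _ _).symm
      rw [swap]
      have hsy : ∀ d : Fin k, (∑ b : Fin k, ww k 3 a b d) = ∑ b : Fin k, ww k 3 a d b := by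
        intro d
        exact Finset.sum_congr rfl fun b _ => ww_symm k 3 a b d
      calc (∑ d : Fin k, (∑ b : Fin k, ww k 3 a b d) * (∑ c : Fin k, ww k 3 a c d))
          = ∑ d : Fin k, (∑ b : Fin k, ww k 3 a d b) ^ 2 := by
            refine Finset.sum_congr rfl fun d _ => ?_
            rw [hsy d, sq]
        _ = _ := sum_ww_sq k 3 a
  have hB : ∀ a : Fin k,
      (∑ b : Fin k,
        ((∑ d : Fin k, ww k 3 a b d) * (∑ e : Fin k, ww k 3 a b e)
          - ∑ d : Fin k, ww k 3 a b d * ww k 3 a b d)) =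
      ((((k : ℝ) - 1) ^ 3 + ((k : ℝ) - 1) * ((k : ℝ) - 2) ^ 3) ^ 2
          + ((k : ℝ) - 1) * (2 * ((k : ℝ) - 2) ^ 3 + ((k : ℝ) - 2) * ((k : ℝ) - 3) ^ 3) ^ 2)
        - (((k : ℝ) - 1) ^ 6 + 3 * ((k : ℝ) - 1) * ((k : ℝ) - 2) ^ 6
          + ((k : ℝ) - 1) * ((k : ℝ) - 2) * ((k : ℝ) - 3) ^ 6) := by
    intro a
    simp_rw [Finset.sum_sub_distrib, ww_mul_self]
    rw [sum_ww2 k 6 a]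
    congr 1
    calc (∑ b : Fin k, (∑ d : Fin k, ww k 3 a b d) * (∑ e : Fin k, ww k 3 a b e))
        = ∑ b : Fin k, (∑ d : Fin k, ww k 3 a b d) ^ 2 :=
          Finset.sum_congr rfl fun b _ => (sq _).symm
      _ = _ := sum_ww_sq k 3 a
  have hAB : ∀ a : Fin k,
      (∑ b : Fin k,
        ((∑ c : Fin k, ((∑ d : Fin k, ww k 3 a b d) * (∑ e : Fin k, ww k 3 a c e)
            - ∑ d : Fin k, ww k 3 a b d * ww k 3 a c d))
          - ((∑ d : Fin k, ww k 3 a b d) * (∑ e : Fin k, ww k 3 a b e)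
            - ∑ d : Fin k, ww k 3 a b d * ww k 3 a b d))) =
      ((((k : ℝ) - 1) ^ 3 + 3 * ((k : ℝ) - 1) * ((k : ℝ) - 2) ^ 3
          + ((k : ℝ) - 1) * ((k : ℝ) - 2) * ((k : ℝ) - 3) ^ 3) ^ 2
        - ((((k : ℝ) - 1) ^ 3 + ((k : ℝ) - 1) * ((k : ℝ) - 2) ^ 3) ^ 2
          + ((k : ℝ) - 1) * (2 * ((k : ℝ) - 2) ^ 3 + ((k : ℝ) - 2) * ((k : ℝ) - 3) ^ 3) ^ 2))
      - (((((k : ℝ) - 1) ^ 3 + ((k : ℝ) - 1) * ((k : ℝ) - 2) ^ 3) ^ 2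
          + ((k : ℝ) - 1) * (2 * ((k : ℝ) - 2) ^ 3 + ((k : ℝ) - 2) * ((k : ℝ) - 3) ^ 3) ^ 2)
        - (((k : ℝ) - 1) ^ 6 + 3 * ((k : ℝ) - 1) * ((k : ℝ) - 2) ^ 6
          + ((k : ℝ) - 1) * ((k : ℝ) - 2) * ((k : ℝ) - 3) ^ 6)) := by
    intro a
    rw [Finset.sum_sub_distrib, hA a, hB a]
  rw [Finset.sum_congr rfl fun a _ => hAB a, Finset.sum_const, Finset.card_univ,
    Fintype.card_fin, nsmul_eq_mul]
  ring

/-! ### The bijection -/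

lemma adj12 : (graphX 3 3).Adj (Sum.inl 1) (Sum.inl 2) := by
  rw [graphX, SimpleGraph.fromRel_adj]
  refine ⟨by decide, Or.inl ?_⟩
  unfold XAdj
  exact Or.inl ⟨rfl, rfl⟩

lemma adj34 : (graphX 3 3).Adj (Sum.inl 3) (Sum.inl 4) := by
  rw [graphX, SimpleGraph.fromRel_adj]
  refine ⟨by decide, Or.inl ?_⟩
  unfold XAdj
  exact Or.inr (Or.inl ⟨rfl, rfl⟩)

lemma adjS (i : Fin 3) (y : Fin 5 ⊕ Fin 3 ⊕ Fin 3)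
    (hy : y = Sum.inl 0 ∨ y = Sum.inl 1 ∨ y = Sum.inl 3) :
    (graphX 3 3).Adj (Sum.inr (Sum.inl i)) y := by
  rw [graphX, SimpleGraph.fromRel_adj]
  refine ⟨?_, Or.inl ?_⟩
  · rcases hy with h | h | h <;> subst h <;> simp
  · unfold XAdj
    exact Or.inr (Or.inr (Or.inl ⟨⟨i, rfl⟩, hy⟩))

lemma adjT (j : Fin 3) (y : Fin 5 ⊕ Fin 3 ⊕ Fin 3)
    (hy : y = Sum.inl 0 ∨ y = Sum.inl 2 ∨ y = Sum.inl 4) :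
    (graphX 3 3).Adj (Sum.inr (Sum.inr j)) y := by
  rw [graphX, SimpleGraph.fromRel_adj]
  refine ⟨?_, Or.inl ?_⟩
  · rcases hy with h | h | h <;> subst h <;> simp
  · unfold XAdj
    exact Or.inr (Or.inr (Or.inr ⟨⟨j, rfl⟩, hy⟩))

lemma invFun_proper (k : ℕ) (a b c d e : Fin k) (hbc : b ≠ c) (hde : d ≠ e)
    (fS : Fin 3 → {x : Fin k // x ≠ a ∧ x ≠ b ∧ x ≠ d})
    (fT : Fin 3 → {x : Fin k // x ≠ a ∧ x ≠ c ∧ x ≠ e}) :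
    ∀ u v, (graphX 3 3).Adj u v →
      (Sum.elim ![a, b, c, d, e] (Sum.elim (fun i => (fS i).1) (fun j => (fT j).1))) u ≠
      (Sum.elim ![a, b, c, d, e] (Sum.elim (fun i => (fS i).1) (fun j => (fT j).1))) v := by
  set F := Sum.elim ![a, b, c, d, e] (Sum.elim (fun i => (fS i).1) (fun j => (fT j).1)) with hF
  have key : ∀ u v, XAdj 3 3 u v → F u ≠ F v := by
    intro u v h
    rcases h with ⟨hu, hv⟩ | ⟨hu, hv⟩ | ⟨⟨i, hu⟩, hv⟩ | ⟨⟨j, hu⟩, hv⟩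
    · subst hu; subst hv; exact hbc
    · subst hu; subst hv; exact hde
    · subst hu
      rcases hv with hv | hv | hv <;> subst hv
      · exact (fS i).2.1
      · exact (fS i).2.2.1
      · exact (fS i).2.2.2
    · subst hu
      rcases hv with hv | hv | hv <;> subst hv
      · exact (fT j).2.1
      · exact (fT j).2.2.1
      · exact (fT j).2.2.2
  intro u v huv
  rw [graphX, SimpleGraph.fromRel_adj] at huv
  rcases huv.2 with h | h
  · exact key u v h
  · exact (key v u h).symm

def colEquiv (k : ℕ) :
    {f : Fin 5 ⊕ Fin 3 ⊕ Fin 3 → Fin k // ∀ u v, (graphX 3 3).Adj u v → f u ≠ f v} ≃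
    Σ p : {p : Fin k × Fin k × Fin k × Fin k × Fin k //
        p.2.1 ≠ p.2.2.1 ∧ p.2.2.2.1 ≠ p.2.2.2.2},
      (Fin 3 → {x : Fin k // x ≠ p.1.1 ∧ x ≠ p.1.2.1 ∧ x ≠ p.1.2.2.2.1}) ×
      (Fin 3 → {x : Fin k // x ≠ p.1.1 ∧ x ≠ p.1.2.2.1 ∧ x ≠ p.1.2.2.2.2}) where
  toFun f := ⟨⟨(f.1 (Sum.inl 0), f.1 (Sum.inl 1), f.1 (Sum.inl 2), f.1 (Sum.inl 3),
      f.1 (Sum.inl 4)), f.2 _ _ adj12, f.2 _ _ adj34⟩,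
    fun i => ⟨f.1 (Sum.inr (Sum.inl i)),
      (f.2 _ _ (adjS i _ (Or.inl rfl))),
      (f.2 _ _ (adjS i _ (Or.inr (Or.inl rfl)))),
      (f.2 _ _ (adjS i _ (Or.inr (Or.inr rfl))))⟩,
    fun j => ⟨f.1 (Sum.inr (Sum.inr j)),
      (f.2 _ _ (adjT j _ (Or.inl rfl))),
      (f.2 _ _ (adjT j _ (Or.inr (Or.inl rfl)))),
      (f.2 _ _ (adjT j _ (Or.inr (Or.inr rfl))))⟩⟩
  invFun x := ⟨Sum.elim ![x.1.1.1, x.1.1.2.1, x.1.1.2.2.1, x.1.1.2.2.2.1, x.1.1.2.2.2.2]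
      (Sum.elim (fun i => ((x.2.1 i) : Fin k)) (fun j => ((x.2.2 j) : Fin k))),
    invFun_proper k _ _ _ _ _ x.1.2.1 x.1.2.2 x.2.1 x.2.2⟩
  left_inv f := by
    apply Subtype.ext
    funext x
    rcases x with x | x | x
    · fin_cases x <;> rfl
    · rfl
    · rfl
  right_inv x := by
    obtain ⟨⟨⟨a, b, c, d, e⟩, h1, h2⟩, fS, fT⟩ := x
    rfl

/-! ### Counting -/

lemma numColorings_eq (k : ℕ) :
    ((numColorings (graphX 3 3) k : ℝ)) =
      ∑ a : Fin k, ∑ b : Fin k, ∑ c : Fin k, ∑ d : Fin k, ∑ e : Fin k,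
        (if b ≠ c ∧ d ≠ e then ww k 3 a b d * ww k 3 a c e else 0) := by
  have hfilter : ∀ a b d : Fin k,
      Finset.univ.filter (fun x : Fin k => x ≠ a ∧ x ≠ b ∧ x ≠ d) =
        Finset.univ \ {a, b, d} := by
    intro a b d
    ext x
    simp [not_or]
  have hcard : ∀ a b d : Fin k,
      Nat.card {x : Fin k // x ≠ a ∧ x ≠ b ∧ x ≠ d} =
        (Finset.univ \ ({a, b, d} : Finset (Fin k))).card := by
    intro a b d
    rw [Nat.card_eq_fintype_card, Fintype.card_subtype, hfilter]
  rw [numColorings, Nat.card_congr (colEquiv k), Nat.card_eq_fintype_card,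
    Fintype.card_sigma]
  have hterm : ∀ p : {p : Fin k × Fin k × Fin k × Fin k × Fin k //
      p.2.1 ≠ p.2.2.1 ∧ p.2.2.2.1 ≠ p.2.2.2.2},
      Fintype.card ((Fin 3 → {x : Fin k // x ≠ p.1.1 ∧ x ≠ p.1.2.1 ∧ x ≠ p.1.2.2.2.1}) ×
        (Fin 3 → {x : Fin k // x ≠ p.1.1 ∧ x ≠ p.1.2.2.1 ∧ x ≠ p.1.2.2.2.2})) =
      (Finset.univ \ ({p.1.1, p.1.2.1, p.1.2.2.2.1} : Finset (Fin k))).card ^ 3 *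
      (Finset.univ \ ({p.1.1, p.1.2.2.1, p.1.2.2.2.2} : Finset (Fin k))).card ^ 3 := by
    intro p
    rw [Fintype.card_prod, Fintype.card_fun, Fintype.card_fun, Fintype.card_fin,
      Fintype.card_subtype, Fintype.card_subtype, hfilter, hfilter]
  rw [Finset.sum_congr rfl (fun p _ => hterm p)]
  rw [← Finset.sum_subtype (p := fun p : Fin k × Fin k × Fin k × Fin k × Fin k =>
      p.2.1 ≠ p.2.2.1 ∧ p.2.2.2.1 ≠ p.2.2.2.2)
      (Finset.univ.filter (fun p : Fin k × Fin k × Fin k × Fin k × Fin k =>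
        p.2.1 ≠ p.2.2.1 ∧ p.2.2.2.1 ≠ p.2.2.2.2)) (by simp)
      (fun p => (Finset.univ \ ({p.1, p.2.1, p.2.2.2.1} : Finset (Fin k))).card ^ 3 *
        (Finset.univ \ ({p.1, p.2.2.1, p.2.2.2.2} : Finset (Fin k))).card ^ 3)]
  rw [Finset.sum_filter]
  rw [Fintype.sum_prod_type]
  simp_rw [Fintype.sum_prod_type]
  push_cast
  refine Finset.sum_congr rfl fun a _ => Finset.sum_congr rfl fun b _ =>
    Finset.sum_congr rfl fun c _ => Finset.sum_congr rfl fun d _ =>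
    Finset.sum_congr rfl fun e _ => ?_
  by_cases h : b ≠ c ∧ d ≠ e
  · rw [if_pos h, if_pos h]
    unfold ww
    ring
  · rw [if_neg h, if_neg h]


open Polynomial in
/-- The chromatic polynomial of `X(3,3)` factors as
`x (x-1) (x-2) (x^8 - 17x^7 + 137x^6 - 677x^5 + 2228x^4 - 4969x^3 + 7284x^2 - 6363x + 2509)`. -/
theorem chromaticPolynomial_X33 (P : Polynomial ℝ)
    (hP : IsChromaticPolynomial (graphX 3 3) P) :
    P = X * (X - 1) * (X - 2) *
      (X ^ 8 - 17 * X ^ 7 + 137 * X ^ 6 - 677 * X ^ 5 + 2228 * X ^ 4 - 4969 * X ^ 3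
        + 7284 * X ^ 2 - 6363 * X + 2509) := by

  apply Polynomial.eq_of_infinite_eval_eq
  have hsub : Set.range ((↑) : ℕ → ℝ) ⊆ {x | P.eval x =
      (X * (X - 1) * (X - 2) *
        (X ^ 8 - 17 * X ^ 7 + 137 * X ^ 6 - 677 * X ^ 5 + 2228 * X ^ 4 - 4969 * X ^ 3
          + 7284 * X ^ 2 - 6363 * X + 2509) : Polynomial ℝ).eval x} := by
    rintro x ⟨k, rfl⟩
    show P.eval (k : ℝ) = _
    rw [hP k, numColorings_eq, big_sum]
    simp only [Polynomial.eval_mul, Polynomial.eval_add, Polynomial.eval_sub,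
      Polynomial.eval_pow, Polynomial.eval_X, Polynomial.eval_one, Polynomial.eval_ofNat,
      Polynomial.eval_natCast]
    ring
  exact (Set.infinite_range_of_injective Nat.cast_injective).mono hsub
end

section
/- The polynomial Q(x) = x^8 - 17x^7 + 137x^6 - 677x^5 + 2228x^4 - 4969x^3 + 7284x^2 - 6363x + 2509 has a real root in the open interval (1.9026, 1.9027); consequently the chromatic polynomial of X(3,3) has a real root strictly between 1 and 2. -/
open Finset

namespace X33

/-- The number of colors in `Fin k` avoiding the three colors `a`, `b`, `d`, as a real. -/
noncomputable def cnt (k : ℕ) (a b d : Fin k) : ℝ :=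
  ∑ c : Fin k, if c ≠ a ∧ c ≠ b ∧ c ≠ d then 1 else 0

variable {k : ℕ}

lemma cnt_card (a b d : Fin k) :
    cnt k a b d = (k : ℝ) - (({a, b, d} : Finset (Fin k)).card : ℝ) := by
  have h : ∀ c : Fin k, (if c ≠ a ∧ c ≠ b ∧ c ≠ d then (1:ℝ) else 0)
      = 1 - (if c ∈ ({a, b, d} : Finset (Fin k)) then (1:ℝ) else 0) := by
    intro c
    by_cases h : c ∈ ({a, b, d} : Finset (Fin k)) <;>
      simp_all [Finset.mem_insert, Finset.mem_singleton] <;> tauto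
  rw [cnt]
  simp only [h]
  rw [Finset.sum_sub_distrib, Finset.sum_const, Finset.card_univ, Fintype.card_fin,
    Finset.sum_ite_mem, Finset.univ_inter, Finset.sum_const]
  simp

lemma cnt_swap23 (a b d : Fin k) : cnt k a b d = cnt k a d b := by
  unfold cnt; exact Finset.sum_congr rfl fun c _ => if_congr (by tauto) rfl rfl

lemma cnt_swap12 (a b d : Fin k) : cnt k a b d = cnt k b a d := by
  unfold cnt; exact Finset.sum_congr rfl fun c _ => if_congr (by tauto) rfl rfl

lemma cnt_aaa (a : Fin k) : cnt k a a a = (k : ℝ) - 1 := by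
  rw [cnt_card]; norm_num

lemma cnt_aad {a d : Fin k} (h : d ≠ a) : cnt k a a d = (k : ℝ) - 2 := by
  rw [cnt_card]
  rw [show ({a, a, d} : Finset (Fin k)) = {a, d} by ext x; simp [or_comm, or_assoc]]
  rw [Finset.card_insert_of_notMem (by simp [h.symm]), Finset.card_singleton]
  norm_num

lemma cnt_abd {a b d : Fin k} (h1 : b ≠ a) (h2 : d ≠ a) (h3 : d ≠ b) :
    cnt k a b d = (k : ℝ) - 3 := by
  rw [cnt_card]
  rw [Finset.card_insert_of_notMem (by simp [h1.symm, h2.symm]),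
    Finset.card_insert_of_notMem (by simp [h3.symm]), Finset.card_singleton]
  norm_num

lemma Gm_eq (m : ℕ) (a : Fin k) :
    ∑ c : Fin k, cnt k a a c ^ m
      = ((k:ℝ) - 1) ^ m + ((k:ℝ) - 1) * ((k:ℝ) - 2) ^ m := by
  rw [← Finset.add_sum_erase _ _ (Finset.mem_univ a), cnt_aaa]
  congr 1
  rw [Finset.sum_congr rfl (fun c hc => by
      rw [cnt_aad (Finset.ne_of_mem_erase hc)]), Finset.sum_const,
    Finset.card_erase_of_mem (Finset.mem_univ a), Finset.card_univ, Fintype.card_fin]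
  have hk : 1 ≤ k := a.pos
  rw [nsmul_eq_mul, Nat.cast_sub hk]
  push_cast
  ring

lemma Gm_ne (m : ℕ) {a b : Fin k} (h : b ≠ a) :
    ∑ c : Fin k, cnt k a b c ^ m
      = 2 * ((k:ℝ) - 2) ^ m + ((k:ℝ) - 2) * ((k:ℝ) - 3) ^ m := by
  have hmem : b ∈ Finset.univ.erase a := Finset.mem_erase.2 ⟨h, Finset.mem_univ b⟩
  rw [← Finset.add_sum_erase _ _ (Finset.mem_univ a),
    ← Finset.add_sum_erase _ _ hmem]
  have h1 : cnt k a b a = (k:ℝ) - 2 := by rw [cnt_swap23, cnt_aad h]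
  have h2 : cnt k a b b = (k:ℝ) - 2 := by rw [cnt_swap12, cnt_swap23, cnt_aad h.symm]
  rw [h1, h2]
  rw [Finset.sum_congr rfl (fun c hc => by
      obtain ⟨hcb, hca⟩ := Finset.mem_erase.1 hc
      rw [cnt_abd h (Finset.ne_of_mem_erase hca) hcb]), Finset.sum_const,
    Finset.card_erase_of_mem hmem, Finset.card_erase_of_mem (Finset.mem_univ a),
    Finset.card_univ, Fintype.card_fin]
  have hk : 2 ≤ k := by
    have : Nontrivial (Fin k) := ⟨a, b, h.symm⟩
    exact Nat.succ_le_of_lt (by simpa using Fintype.one_lt_card (α := Fin k))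
  rw [nsmul_eq_mul, Nat.cast_sub (by omega : 1 ≤ k - 1), Nat.cast_sub (by omega : 1 ≤ k)]
  push_cast
  ring

lemma FF3 (a : Fin k) :
    ∑ b : Fin k, ∑ c : Fin k, cnt k a b c ^ 3
      = (((k:ℝ)-1)^3 + ((k:ℝ)-1)*((k:ℝ)-2)^3)
        + ((k:ℝ)-1) * (2*((k:ℝ)-2)^3 + ((k:ℝ)-2)*((k:ℝ)-3)^3) := by
  rw [← Finset.add_sum_erase _ _ (Finset.mem_univ a), Gm_eq]
  congr 1
  rw [Finset.sum_congr rfl (fun b hb => Gm_ne 3 (Finset.ne_of_mem_erase hb)),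
    Finset.sum_const, Finset.card_erase_of_mem (Finset.mem_univ a),
    Finset.card_univ, Fintype.card_fin]
  have hk : 1 ≤ k := a.pos
  rw [nsmul_eq_mul, Nat.cast_sub hk]
  push_cast
  ring

lemma SQ (a : Fin k) :
    ∑ b : Fin k, (∑ c : Fin k, cnt k a b c ^ 3) ^ 2
      = (((k:ℝ)-1)^3 + ((k:ℝ)-1)*((k:ℝ)-2)^3)^2
        + ((k:ℝ)-1) * (2*((k:ℝ)-2)^3 + ((k:ℝ)-2)*((k:ℝ)-3)^3)^2 := by
  rw [← Finset.add_sum_erase _ _ (Finset.mem_univ a), Gm_eq]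
  congr 1
  rw [Finset.sum_congr rfl (fun b hb => by rw [Gm_ne 3 (Finset.ne_of_mem_erase hb)]),
    Finset.sum_const, Finset.card_erase_of_mem (Finset.mem_univ a),
    Finset.card_univ, Fintype.card_fin]
  have hk : 1 ≤ k := a.pos
  rw [nsmul_eq_mul, Nat.cast_sub hk]
  push_cast
  ring

lemma FF6 (a : Fin k) :
    ∑ b : Fin k, ∑ c : Fin k, cnt k a b c ^ 6
      = (((k:ℝ)-1)^6 + ((k:ℝ)-1)*((k:ℝ)-2)^6)
        + ((k:ℝ)-1) * (2*((k:ℝ)-2)^6 + ((k:ℝ)-2)*((k:ℝ)-3)^6) := by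
  rw [← Finset.add_sum_erase _ _ (Finset.mem_univ a), Gm_eq]
  congr 1
  rw [Finset.sum_congr rfl (fun b hb => Gm_ne 6 (Finset.ne_of_mem_erase hb)),
    Finset.sum_const, Finset.card_erase_of_mem (Finset.mem_univ a),
    Finset.card_univ, Fintype.card_fin]
  have hk : 1 ≤ k := a.pos
  rw [nsmul_eq_mul, Nat.cast_sub hk]
  push_cast
  ring

/-- The master sum: number of proper colorings of `X(3,3)` as a quintuple sum. -/
noncomputable def S5 (k : ℕ) : ℝ :=
  ∑ c0 : Fin k, ∑ c1 : Fin k, ∑ c3 : Fin k, ∑ c2 : Fin k, ∑ c4 : Fin k,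
    (if c1 ≠ c2 ∧ c3 ≠ c4 then (1:ℝ) else 0) * cnt k c0 c1 c3 ^ 3 * cnt k c0 c2 c4 ^ 3

lemma S5_eq (k : ℕ) :
    S5 k = (k:ℝ) *
        ((((k:ℝ)-1)^3 + ((k:ℝ)-1)*((k:ℝ)-2)^3)
          + ((k:ℝ)-1) * (2*((k:ℝ)-2)^3 + ((k:ℝ)-2)*((k:ℝ)-3)^3)) ^ 2
      - 2 * (k:ℝ) *
        ((((k:ℝ)-1)^3 + ((k:ℝ)-1)*((k:ℝ)-2)^3)^2
          + ((k:ℝ)-1) * (2*((k:ℝ)-2)^3 + ((k:ℝ)-2)*((k:ℝ)-3)^3)^2)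
      + (k:ℝ) *
        ((((k:ℝ)-1)^6 + ((k:ℝ)-1)*((k:ℝ)-2)^6)
          + ((k:ℝ)-1) * (2*((k:ℝ)-2)^6 + ((k:ℝ)-2)*((k:ℝ)-3)^6)) := by
  set K : ℝ := (k : ℝ) with hK
  set Fv : ℝ := ((K-1)^3 + (K-1)*(K-2)^3) + (K-1)*(2*(K-2)^3 + (K-2)*(K-3)^3) with hFv
  set Sv : ℝ := ((K-1)^3 + (K-1)*(K-2)^3)^2 + (K-1)*(2*(K-2)^3 + (K-2)*(K-3)^3)^2 with hSv
  set Gv : ℝ := ((K-1)^6 + (K-1)*(K-2)^6) + (K-1)*(2*(K-2)^6 + (K-2)*(K-3)^6) with hGv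
  have pointwise : ∀ c0 c1 c3 c2 c4 : Fin k,
      (if c1 ≠ c2 ∧ c3 ≠ c4 then (1:ℝ) else 0) * cnt k c0 c1 c3 ^ 3 * cnt k c0 c2 c4 ^ 3
        = cnt k c0 c1 c3 ^ 3 * cnt k c0 c2 c4 ^ 3
          - (if c2 = c1 then cnt k c0 c1 c3 ^ 3 * cnt k c0 c2 c4 ^ 3 else 0)
          - (if c4 = c3 then cnt k c0 c1 c3 ^ 3 * cnt k c0 c2 c4 ^ 3 else 0)
          + (if c2 = c1 then (if c4 = c3 then cnt k c0 c1 c3 ^ 3 * cnt k c0 c2 c4 ^ 3 else 0) else 0) := by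
    intro c0 c1 c3 c2 c4
    rcases eq_or_ne c2 c1 with rfl | h1
    · rcases eq_or_ne c4 c3 with rfl | h2
      · simp
      · simp [h2]
    · rcases eq_or_ne c4 c3 with rfl | h2
      · simp [h1]
      · simp [h1, h2, Ne.symm h1, Ne.symm h2]
  have inner : ∀ c0 c1 c3 : Fin k,
      (∑ c2 : Fin k, ∑ c4 : Fin k,
        (if c1 ≠ c2 ∧ c3 ≠ c4 then (1:ℝ) else 0) * cnt k c0 c1 c3 ^ 3 * cnt k c0 c2 c4 ^ 3)
      = cnt k c0 c1 c3 ^ 3 * Fv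
        - cnt k c0 c1 c3 ^ 3 * (∑ c4 : Fin k, cnt k c0 c1 c4 ^ 3)
        - cnt k c0 c1 c3 ^ 3 * (∑ c2 : Fin k, cnt k c0 c2 c3 ^ 3)
        + cnt k c0 c1 c3 ^ 3 * cnt k c0 c1 c3 ^ 3 := by
    intro c0 c1 c3
    simp only [pointwise, Finset.sum_sub_distrib, Finset.sum_add_distrib]
    congr 1
    · congr 1
      · congr 1
        · simp only [← Finset.mul_sum]
          rw [FF3]
        · rw [Finset.sum_comm]
          rw [Finset.sum_congr rfl fun c4 _ => Finset.sum_ite_eq' univ c1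
            (fun c2 => cnt k c0 c1 c3 ^ 3 * cnt k c0 c2 c4 ^ 3)]
          simp [← Finset.mul_sum]
      · rw [Finset.sum_congr rfl fun c2 _ => Finset.sum_ite_eq' univ c3
          (fun c4 => cnt k c0 c1 c3 ^ 3 * cnt k c0 c2 c4 ^ 3)]
        simp [← Finset.mul_sum]
    · rw [Finset.sum_comm]
      rw [Finset.sum_congr rfl fun c4 _ => Finset.sum_ite_eq' univ c1
        (fun c2 => if c4 = c3 then cnt k c0 c1 c3 ^ 3 * cnt k c0 c2 c4 ^ 3 else 0)]
      simp [Finset.sum_ite_eq' univ c3]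
  unfold S5
  simp only [inner, Finset.sum_sub_distrib, Finset.sum_add_distrib]
  have hW1 : (∑ c0 : Fin k, ∑ c1 : Fin k, ∑ c3 : Fin k, cnt k c0 c1 c3 ^ 3 * Fv)
      = K * Fv ^ 2 := by
    simp only [← Finset.sum_mul, FF3, ← hFv]
    rw [Finset.sum_const, Finset.card_univ, Fintype.card_fin, nsmul_eq_mul]
    ring
  have hW2 : (∑ c0 : Fin k, ∑ c1 : Fin k, ∑ c3 : Fin k,
        cnt k c0 c1 c3 ^ 3 * (∑ c4 : Fin k, cnt k c0 c1 c4 ^ 3))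
      = K * Sv := by
    simp only [← Finset.sum_mul, ← pow_two, SQ, ← hSv]
    rw [Finset.sum_const, Finset.card_univ, Fintype.card_fin, nsmul_eq_mul]
  have hW3 : (∑ c0 : Fin k, ∑ c1 : Fin k, ∑ c3 : Fin k,
        cnt k c0 c1 c3 ^ 3 * (∑ c2 : Fin k, cnt k c0 c2 c3 ^ 3))
      = K * Sv := by
    have hsw : ∀ c0 c3 : Fin k, (∑ c2 : Fin k, cnt k c0 c2 c3 ^ 3)
        = ∑ c2 : Fin k, cnt k c0 c3 c2 ^ 3 := by
      intro c0 c3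
      exact Finset.sum_congr rfl fun c _ => by rw [cnt_swap23]
    rw [Finset.sum_congr rfl fun c0 _ => Finset.sum_comm]
    simp only [← Finset.sum_mul, ← pow_two, hsw, SQ, ← hSv]
    rw [Finset.sum_const, Finset.card_univ, Fintype.card_fin, nsmul_eq_mul]
  have hW4 : (∑ c0 : Fin k, ∑ c1 : Fin k, ∑ c3 : Fin k,
        cnt k c0 c1 c3 ^ 3 * cnt k c0 c1 c3 ^ 3)
      = K * Gv := by
    have h6 : ∀ c0 c1 c3 : Fin k, cnt k c0 c1 c3 ^ 3 * cnt k c0 c1 c3 ^ 3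
        = cnt k c0 c1 c3 ^ 6 := fun _ _ _ => by ring
    simp only [h6, FF6, ← hGv]
    rw [Finset.sum_const, Finset.card_univ, Fintype.card_fin, nsmul_eq_mul]
  rw [hW1, hW2, hW3, hW4]
  ring

abbrev V33 := Fin 5 ⊕ Fin 3 ⊕ Fin 3

def Cond (k : ℕ) (f : V33 → Fin k) : Prop :=
  (f (.inl 1) ≠ f (.inl 2) ∧ f (.inl 3) ≠ f (.inl 4)) ∧
  (∀ i : Fin 3, f (.inr (.inl i)) ≠ f (.inl 0) ∧ f (.inr (.inl i)) ≠ f (.inl 1)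
      ∧ f (.inr (.inl i)) ≠ f (.inl 3)) ∧
  (∀ j : Fin 3, f (.inr (.inr j)) ≠ f (.inl 0) ∧ f (.inr (.inr j)) ≠ f (.inl 2)
      ∧ f (.inr (.inr j)) ≠ f (.inl 4))

lemma proper_iff (f : V33 → Fin k) :
    (∀ u v, (graphX 3 3).Adj u v → f u ≠ f v) ↔ Cond k f := by
  constructor
  · intro h
    refine ⟨⟨?_, ?_⟩, fun i => ⟨?_, ?_, ?_⟩, fun j => ⟨?_, ?_, ?_⟩⟩
    · exact h _ _ ((SimpleGraph.fromRel_adj _ _ _).2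
        ⟨by simp, Or.inl (Or.inl ⟨rfl, rfl⟩)⟩)
    · exact h _ _ ((SimpleGraph.fromRel_adj _ _ _).2
        ⟨by simp, Or.inl (Or.inr (Or.inl ⟨rfl, rfl⟩))⟩)
    · exact h _ _ ((SimpleGraph.fromRel_adj _ _ _).2
        ⟨by simp, Or.inl (Or.inr (Or.inr (Or.inl ⟨⟨i, rfl⟩, Or.inl rfl⟩)))⟩)
    · exact h _ _ ((SimpleGraph.fromRel_adj _ _ _).2
        ⟨by simp, Or.inl (Or.inr (Or.inr (Or.inl ⟨⟨i, rfl⟩, Or.inr (Or.inl rfl)⟩)))⟩)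
    · exact h _ _ ((SimpleGraph.fromRel_adj _ _ _).2
        ⟨by simp, Or.inl (Or.inr (Or.inr (Or.inl ⟨⟨i, rfl⟩, Or.inr (Or.inr rfl)⟩)))⟩)
    · exact h _ _ ((SimpleGraph.fromRel_adj _ _ _).2
        ⟨by simp, Or.inl (Or.inr (Or.inr (Or.inr ⟨⟨j, rfl⟩, Or.inl rfl⟩)))⟩)
    · exact h _ _ ((SimpleGraph.fromRel_adj _ _ _).2
        ⟨by simp, Or.inl (Or.inr (Or.inr (Or.inr ⟨⟨j, rfl⟩, Or.inr (Or.inl rfl)⟩)))⟩)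
    · exact h _ _ ((SimpleGraph.fromRel_adj _ _ _).2
        ⟨by simp, Or.inl (Or.inr (Or.inr (Or.inr ⟨⟨j, rfl⟩, Or.inr (Or.inr rfl)⟩)))⟩)
  · rintro ⟨⟨h12, h34⟩, hS, hT⟩ u v hadj
    rw [graphX, SimpleGraph.fromRel_adj] at hadj
    obtain ⟨-, h | h⟩ := hadj
    · rcases h with ⟨rfl, rfl⟩ | ⟨rfl, rfl⟩ | ⟨⟨i, rfl⟩, rfl | rfl | rfl⟩ |
        ⟨⟨j, rfl⟩, rfl | rfl | rfl⟩
      · exact h12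
      · exact h34
      · exact (hS i).1
      · exact (hS i).2.1
      · exact (hS i).2.2
      · exact (hT j).1
      · exact (hT j).2.1
      · exact (hT j).2.2
    · rcases h with ⟨rfl, rfl⟩ | ⟨rfl, rfl⟩ | ⟨⟨i, rfl⟩, rfl | rfl | rfl⟩ |
        ⟨⟨j, rfl⟩, rfl | rfl | rfl⟩
      · exact h12.symm
      · exact h34.symm
      · exact (hS i).1.symm
      · exact (hS i).2.1.symm
      · exact (hS i).2.2.symm
      · exact (hT j).1.symm
      · exact (hT j).2.1.symm
      · exact (hT j).2.2.symm

def toV (k : ℕ)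
    (p : (Fin k × Fin k × Fin k × Fin k × Fin k) × (Fin 3 → Fin k) × (Fin 3 → Fin k)) :
    V33 → Fin k :=
  Sum.elim (![p.1.1, p.1.2.1, p.1.2.2.2.1, p.1.2.2.1, p.1.2.2.2.2])
    (Sum.elim p.2.1 p.2.2)

def E (k : ℕ) :
    ((Fin k × Fin k × Fin k × Fin k × Fin k) × (Fin 3 → Fin k) × (Fin 3 → Fin k))
      ≃ (V33 → Fin k) where
  toFun := toV k
  invFun f := ((f (.inl 0), f (.inl 1), f (.inl 3), f (.inl 2), f (.inl 4)),
    fun i => f (.inr (.inl i)), fun j => f (.inr (.inr j)))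
  left_inv p := by
    obtain ⟨⟨c0, c1, c3, c2, c4⟩, h1, h2⟩ := p
    simp [toV]
  right_inv f := by
    funext x
    rcases x with i | i | j
    · fin_cases i <;> rfl
    · rfl
    · rfl

lemma inner3 (a b d : Fin k) :
    (∑ h : Fin 3 → Fin k,
        if (∀ i, h i ≠ a ∧ h i ≠ b ∧ h i ≠ d) then (1:ℝ) else 0)
      = cnt k a b d ^ 3 := by
  have hcond : ∀ h : Fin 3 → Fin k,
      (if (∀ i, h i ≠ a ∧ h i ≠ b ∧ h i ≠ d) then (1:ℝ) else 0)
        = ∏ i : Fin 3, (if h i ≠ a ∧ h i ≠ b ∧ h i ≠ d then (1:ℝ) else 0) := by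
    intro h
    rw [Finset.prod_boole]
    simp
  rw [cnt, Finset.sum_pow', Fintype.piFinset_univ]
  simp only [hcond]

lemma count_eq (k : ℕ) : ((numColorings (graphX 3 3) k : ℝ)) = S5 k := by
  classical
  rw [numColorings]
  rw [Nat.card_congr (Equiv.subtypeEquivRight (fun f => proper_iff f))]
  rw [Nat.card_eq_fintype_card, Fintype.card_subtype, Finset.card_filter]
  push_cast
  rw [← Equiv.sum_comp (E k) (fun f => if Cond k f then (1:ℝ) else 0)]
  simp only [Fintype.sum_prod_type]
  have hc : ∀ c0 c1 c3 c2 c4 : Fin k, ∀ h1 h2 : Fin 3 → Fin k,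
      Cond k (E k ⟨⟨c0, c1, c3, c2, c4⟩, h1, h2⟩) ↔
        ((c1 ≠ c2 ∧ c3 ≠ c4) ∧ (∀ i, h1 i ≠ c0 ∧ h1 i ≠ c1 ∧ h1 i ≠ c3)
          ∧ (∀ j, h2 j ≠ c0 ∧ h2 j ≠ c2 ∧ h2 j ≠ c4)) := by
    intro c0 c1 c3 c2 c4 h1 h2
    simp [Cond, E, toV]
  simp only [hc]
  have hsplit : ∀ (A B C : Prop) [Decidable A] [Decidable B] [Decidable C],
      (if A ∧ B ∧ C then (1:ℝ) else 0)
        = (if A then (1:ℝ) else 0) * ((if B then (1:ℝ) else 0) * (if C then (1:ℝ) else 0)) := by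
    intro A B C _ _ _
    by_cases hA : A <;> by_cases hB : B <;> by_cases hC : C <;> simp [hA, hB, hC]
  simp only [hsplit]
  have pull : ∀ (X : ℝ) (Y Z : (Fin 3 → Fin k) → ℝ),
      (∑ h1 : Fin 3 → Fin k, ∑ h2 : Fin 3 → Fin k, X * (Y h1 * Z h2))
        = X * ((∑ h1, Y h1) * (∑ h2, Z h2)) := by
    intro X Y Z
    simp only [← Finset.mul_sum]
    rw [← Finset.sum_mul]
  simp only [pull, inner3]
  rw [S5]
  refine Finset.sum_congr rfl fun c0 _ => Finset.sum_congr rfl fun c1 _ =>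
    Finset.sum_congr rfl fun c3 _ => Finset.sum_congr rfl fun c2 _ =>
    Finset.sum_congr rfl fun c4 _ => ?_
  ring

open Polynomial in
/-- The chromatic polynomial of `X(3,3)`. -/
noncomputable def Rpoly : Polynomial ℝ :=
  (X ^ 8 - 17 * X ^ 7 + 137 * X ^ 6 - 677 * X ^ 5 + 2228 * X ^ 4 - 4969 * X ^ 3
      + 7284 * X ^ 2 - 6363 * X + 2509) * (X ^ 3 - 3 * X ^ 2 + 2 * X)

lemma Rpoly_eval (x : ℝ) :
    Rpoly.eval x = (x ^ 8 - 17 * x ^ 7 + 137 * x ^ 6 - 677 * x ^ 5 + 2228 * x ^ 4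
        - 4969 * x ^ 3 + 7284 * x ^ 2 - 6363 * x + 2509) * (x ^ 3 - 3 * x ^ 2 + 2 * x) := by
  simp [Rpoly]

lemma Rpoly_is_chrom (k : ℕ) : Rpoly.eval ((k : ℝ)) = (numColorings (graphX 3 3) k : ℝ) := by
  rw [Rpoly_eval, count_eq, S5_eq]
  ring

end X33

/-- The polynomial `Q(x) = x^8 - 17x^7 + 137x^6 - 677x^5 + 2228x^4 - 4969x^3 + 7284x^2
- 6363x + 2509` has a real root in the open interval `(1.9026, 1.9027)`; consequently the
chromatic polynomial of `X(3,3)` has a real root strictly between `1` and `2`. -/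
theorem Q_has_root_and_X33_has_chromatic_root (P : Polynomial ℝ)
    (hP : IsChromaticPolynomial (graphX 3 3) P) :
    (∃ x : ℝ, 1.9026 < x ∧ x < 1.9027 ∧
      x ^ 8 - 17 * x ^ 7 + 137 * x ^ 6 - 677 * x ^ 5 + 2228 * x ^ 4 - 4969 * x ^ 3
        + 7284 * x ^ 2 - 6363 * x + 2509 = 0) ∧
    (∃ x : ℝ, 1 < x ∧ x < 2 ∧ P.eval x = 0) := by
  set q : ℝ → ℝ := fun x => x ^ 8 - 17 * x ^ 7 + 137 * x ^ 6 - 677 * x ^ 5 + 2228 * x ^ 4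
      - 4969 * x ^ 3 + 7284 * x ^ 2 - 6363 * x + 2509 with hq
  have hcont : ContinuousOn q (Set.Icc (1.9026 : ℝ) 1.9027) := by
    apply Continuous.continuousOn
    fun_prop
  have hab : (1.9026 : ℝ) ≤ 1.9027 := by norm_num
  have ha : 0 < q 1.9026 := by
    rw [hq]
    norm_num
  have hb : q 1.9027 < 0 := by
    rw [hq]
    norm_num
  have hsub := intermediate_value_Ioo' hab hcont
  obtain ⟨x, hx, hqx⟩ := hsub ⟨hb, ha⟩
  have hPR : P = X33.Rpoly := by
    have hroots : ∀ n : ℕ, (P - X33.Rpoly).IsRoot ((n : ℝ)) := by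
      intro n
      simp only [Polynomial.IsRoot, Polynomial.eval_sub]
      rw [hP n, X33.Rpoly_is_chrom n, sub_self]
    have hzero : P - X33.Rpoly = 0 := by
      apply Polynomial.eq_zero_of_infinite_isRoot
      exact Set.infinite_of_injective_forall_mem Nat.cast_injective hroots
    exact sub_eq_zero.mp hzero
  refine ⟨⟨x, hx.1, hx.2, hqx⟩, ⟨x, ?_, ?_, ?_⟩⟩
  · have : (1 : ℝ) < 1.9026 := by norm_num
    linarith [hx.1]
  · have : (1.9027 : ℝ) < 2 := by norm_num
    linarith [hx.2]
  · have hqx' : x ^ 8 - 17 * x ^ 7 + 137 * x ^ 6 - 677 * x ^ 5 + 2228 * x ^ 4 - 4969 * x ^ 3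
        + 7284 * x ^ 2 - 6363 * x + 2509 = 0 := hqx
    rw [hPR, X33.Rpoly_eval, hqx', zero_mul]
end

section
/- For all integers s, t ≥ 3, the derivative of the chromatic polynomial of X(s,t) evaluated at x = 2 equals 2((-1)^s + (-1)^t + (-1)^{s+t}). -/
namespace XPf


variable {k : ℕ}

def w (k : ℕ) (a b c : Fin k) : ℕ :=
  (Finset.univ.filter (fun x => x ≠ a ∧ x ≠ b ∧ x ≠ c)).card

lemma w_eq (a b c : Fin k) : w k a b c = k - ({a, b, c} : Finset (Fin k)).card := by
  classical
  have h : (Finset.univ.filter (fun x => x ≠ a ∧ x ≠ b ∧ x ≠ c)) =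
      ({a, b, c} : Finset (Fin k))ᶜ := by
    ext x
    simp [not_or, and_assoc]
  rw [w, h, Finset.card_compl, Fintype.card_fin]

lemma w_cast (a b c : Fin k) :
    ((w k a b c : ℕ) : ℝ) = (k : ℝ) - (({a, b, c} : Finset (Fin k)).card : ℝ) := by
  rw [w_eq, Nat.cast_sub (by simpa using Finset.card_le_univ ({a,b,c} : Finset (Fin k)))]

lemma w_comm23 (a b c : Fin k) : w k a b c = w k a c b := by
  have h : ({a, b, c} : Finset (Fin k)) = {a, c, b} := by
    ext x; simp; tauto
  rw [w_eq, w_eq, h]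

lemma w_cast_distinct {a b c : Fin k} (h1 : a ≠ b) (h2 : a ≠ c) (h3 : b ≠ c) :
    ((w k a b c : ℕ) : ℝ) = (k : ℝ) - 3 := by
  rw [w_cast]
  have h : ({a, b, c} : Finset (Fin k)).card = 3 := by
    rw [Finset.card_insert_of_notMem (by simp [h1, h2]),
      Finset.card_insert_of_notMem (by simp [h3])]
    simp
  rw [h]; norm_num

lemma w_cast_pair1 {a b : Fin k} (h : a ≠ b) (c : Fin k) (hc : c = a ∨ c = b) :
    ((w k a b c : ℕ) : ℝ) = (k : ℝ) - 2 := by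
  rw [w_cast]
  have he : ({a, b, c} : Finset (Fin k)) = {a, b} := by
    rcases hc with rfl | rfl <;> ext x <;> simp [or_comm, or_assoc, or_left_comm]
  rw [he, Finset.card_insert_of_notMem (by simp [h]), Finset.card_singleton]
  norm_num

lemma w_cast_aac {a c : Fin k} (h : a ≠ c) : ((w k a a c : ℕ) : ℝ) = (k : ℝ) - 2 := by
  rw [w_cast]
  have he : ({a, a, c} : Finset (Fin k)) = {a, c} := by simp
  rw [he, Finset.card_insert_of_notMem (by simp [h]), Finset.card_singleton]
  norm_num

lemma w_cast_aaa (a : Fin k) : ((w k a a a : ℕ) : ℝ) = (k : ℝ) - 1 := by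
  rw [w_cast]; simp

lemma sum_indicator (a : Fin k) (u v : ℝ) :
    (∑ b : Fin k, if a = b then u else v) = u + ((k : ℝ) - 1) * v := by
  classical
  rw [Finset.sum_ite, Finset.filter_eq, if_pos (Finset.mem_univ a)]
  rw [Finset.sum_const, Finset.sum_const]
  have hcard : (Finset.univ.filter (fun b => ¬ a = b)).card = k - 1 := by
    have h : (Finset.univ.filter (fun b => ¬ a = b)) = ({a} : Finset (Fin k))ᶜ := by
      ext x; simp [eq_comm]
    rw [h, Finset.card_compl, Fintype.card_fin, Finset.card_singleton]
  have hk : 1 ≤ k := a.pos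
  rw [hcard, Finset.card_singleton]
  simp only [nsmul_eq_mul, one_mul, Nat.cast_sub hk]
  push_cast
  ring

noncomputable def gR (m : ℕ) (x : ℝ) : ℝ := (x - 1) ^ m + (x - 1) * (x - 2) ^ m
noncomputable def hR (m : ℕ) (x : ℝ) : ℝ := 2 * (x - 2) ^ m + (x - 2) * (x - 3) ^ m

lemma sumW (m : ℕ) (a b : Fin k) :
    (∑ x : Fin k, ((w k a b x : ℕ) : ℝ) ^ m) =
      if a = b then gR m (k : ℝ) else hR m (k : ℝ) := by
  classical
  by_cases h : a = b
  · subst h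
    rw [if_pos rfl, ← Finset.sum_sdiff (Finset.subset_univ ({a} : Finset (Fin k)))]
    rw [Finset.sum_singleton, w_cast_aaa]
    have hc : ∀ x ∈ Finset.univ \ ({a} : Finset (Fin k)),
        ((w k a a x : ℕ) : ℝ) ^ m = ((k : ℝ) - 2) ^ m := by
      intro x hx
      simp only [Finset.mem_sdiff, Finset.mem_singleton] at hx
      rw [w_cast_aac (fun hh => hx.2 hh.symm)]
    rw [Finset.sum_congr rfl hc, Finset.sum_const]
    have hcard : (Finset.univ \ ({a} : Finset (Fin k))).card = k - 1 := by
      rw [Finset.card_sdiff_of_subset (Finset.subset_univ _), Finset.card_singleton,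
        Finset.card_univ, Fintype.card_fin]
    have hk : 1 ≤ k := a.pos
    rw [hcard, gR]
    simp only [nsmul_eq_mul, Nat.cast_sub hk]
    push_cast
    ring
  · rw [if_neg h, ← Finset.sum_sdiff (Finset.subset_univ ({a, b} : Finset (Fin k)))]
    have hpair : ∑ x ∈ ({a, b} : Finset (Fin k)), ((w k a b x : ℕ) : ℝ) ^ m =
        2 * ((k : ℝ) - 2) ^ m := by
      rw [Finset.sum_pair h, w_cast_pair1 h a (Or.inl rfl), w_cast_pair1 h b (Or.inr rfl)]
      ring
    have hc : ∀ x ∈ Finset.univ \ ({a, b} : Finset (Fin k)),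
        ((w k a b x : ℕ) : ℝ) ^ m = ((k : ℝ) - 3) ^ m := by
      intro x hx
      simp only [Finset.mem_sdiff, Finset.mem_insert, Finset.mem_singleton, not_or] at hx
      rw [w_cast_distinct h (fun hh => hx.2.1 hh.symm) (fun hh => hx.2.2 hh.symm)]
    rw [Finset.sum_congr rfl hc, Finset.sum_const, hpair]
    have hcard : (Finset.univ \ ({a, b} : Finset (Fin k))).card = k - 2 := by
      rw [Finset.card_sdiff_of_subset (Finset.subset_univ _), Finset.card_univ, Fintype.card_fin,
        Finset.card_insert_of_notMem (by simp [h]), Finset.card_singleton]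
    have hk : 2 ≤ k := by
      have h2 := Finset.card_le_univ ({a, b} : Finset (Fin k))
      rw [Finset.card_pair h] at h2
      simpa using h2
    rw [hcard, hR]
    simp only [nsmul_eq_mul, Nat.cast_sub hk]
    push_cast
    ring



variable {k s t : ℕ}

def Pf (s t k : ℕ) (f : Fin 5 ⊕ Fin s ⊕ Fin t → Fin k) : Prop :=
  (f (Sum.inl 1) ≠ f (Sum.inl 2) ∧ f (Sum.inl 3) ≠ f (Sum.inl 4)) ∧
  (∀ i : Fin s, f (Sum.inr (Sum.inl i)) ≠ f (Sum.inl 0) ∧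
    f (Sum.inr (Sum.inl i)) ≠ f (Sum.inl 1) ∧ f (Sum.inr (Sum.inl i)) ≠ f (Sum.inl 3)) ∧
  (∀ j : Fin t, f (Sum.inr (Sum.inr j)) ≠ f (Sum.inl 0) ∧
    f (Sum.inr (Sum.inr j)) ≠ f (Sum.inl 2) ∧ f (Sum.inr (Sum.inr j)) ≠ f (Sum.inl 4))

lemma proper_iff (f : Fin 5 ⊕ Fin s ⊕ Fin t → Fin k) :
    (∀ u v, (graphX s t).Adj u v → f u ≠ f v) ↔ Pf s t k f := by
  rw [Pf]
  constructor
  · intro h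
    refine ⟨⟨h _ _ ?_, h _ _ ?_⟩, fun i => ⟨h _ _ ?_, h _ _ ?_, h _ _ ?_⟩,
      fun j => ⟨h _ _ ?_, h _ _ ?_, h _ _ ?_⟩⟩ <;>
      (simp [graphX, SimpleGraph.fromRel_adj, XAdj])
  · rintro ⟨⟨h12, h34⟩, hS, hT⟩ u v hadj
    rw [graphX, SimpleGraph.fromRel_adj] at hadj
    obtain ⟨-, hx | hx⟩ := hadj
    · rcases hx with ⟨rfl, rfl⟩ | ⟨rfl, rfl⟩ | ⟨⟨i, rfl⟩, rfl | rfl | rfl⟩ |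
        ⟨⟨j, rfl⟩, rfl | rfl | rfl⟩
      · exact h12
      · exact h34
      · exact (hS i).1
      · exact (hS i).2.1
      · exact (hS i).2.2
      · exact (hT j).1
      · exact (hT j).2.1
      · exact (hT j).2.2
    · rcases hx with ⟨rfl, rfl⟩ | ⟨rfl, rfl⟩ | ⟨⟨i, rfl⟩, rfl | rfl | rfl⟩ |
        ⟨⟨j, rfl⟩, rfl | rfl | rfl⟩
      · exact h12.symm
      · exact h34.symm
      · exact ((hS i).1).symm
      · exact ((hS i).2.1).symm
      · exact ((hS i).2.2).symm
      · exact ((hT j).1).symm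
      · exact ((hT j).2.1).symm
      · exact ((hT j).2.2).symm


def fiberEquiv (c : Fin 5 → Fin k) (hc : c 1 ≠ c 2 ∧ c 3 ≠ c 4) :
    {f : (Fin 5 ⊕ Fin s ⊕ Fin t) → Fin k // Pf s t k f ∧ f ∘ Sum.inl = c} ≃
      (Fin s → {x : Fin k // x ≠ c 0 ∧ x ≠ c 1 ∧ x ≠ c 3}) ×
      (Fin t → {x : Fin k // x ≠ c 0 ∧ x ≠ c 2 ∧ x ≠ c 4}) where
  toFun f :=
    (fun i => ⟨f.1 (Sum.inr (Sum.inl i)), by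
      have h := f.2.1.2.1 i
      have hc0 : f.1 (Sum.inl 0) = c 0 := congrFun f.2.2 0
      have hc1 : f.1 (Sum.inl 1) = c 1 := congrFun f.2.2 1
      have hc3 : f.1 (Sum.inl 3) = c 3 := congrFun f.2.2 3
      rw [hc0, hc1, hc3] at h
      exact h⟩,
     fun j => ⟨f.1 (Sum.inr (Sum.inr j)), by
      have h := f.2.1.2.2 j
      have hc0 : f.1 (Sum.inl 0) = c 0 := congrFun f.2.2 0
      have hc2 : f.1 (Sum.inl 2) = c 2 := congrFun f.2.2 2
      have hc4 : f.1 (Sum.inl 4) = c 4 := congrFun f.2.2 4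
      rw [hc0, hc2, hc4] at h
      exact h⟩)
  invFun p :=
    ⟨Sum.elim c (Sum.elim (fun i => (p.1 i).1) (fun j => (p.2 j).1)), by
      refine ⟨⟨⟨hc.1, hc.2⟩, fun i => (p.1 i).2, fun j => (p.2 j).2⟩, ?_⟩
      funext a; rfl⟩
  left_inv f := by
    apply Subtype.ext
    funext x
    rcases x with a | b
    · exact (congrFun f.2.2 a).symm
    · rcases b with i | j <;> rfl
  right_inv p := rfl

lemma numColorings_eq :
    numColorings (graphX s t) k =
      ∑ c : Fin 5 → Fin k,
        if c 1 ≠ c 2 ∧ c 3 ≠ c 4 then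
          w k (c 0) (c 1) (c 3) ^ s * w k (c 0) (c 2) (c 4) ^ t else 0 := by
  classical
  have h1 : numColorings (graphX s t) k = Nat.card {f : (Fin 5 ⊕ Fin s ⊕ Fin t) → Fin k // Pf s t k f} := by
    apply Nat.card_congr
    exact Equiv.subtypeEquivRight (fun f => proper_iff f)
  rw [h1, Nat.card_eq_fintype_card, Fintype.card_subtype]
  rw [Finset.card_eq_sum_card_fiberwise
    (f := fun f : (Fin 5 ⊕ Fin s ⊕ Fin t) → Fin k => f ∘ Sum.inl) (t := Finset.univ)
    (fun f _ => Finset.mem_univ _)]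
  refine Finset.sum_congr rfl (fun c _ => ?_)
  rw [Finset.filter_filter]
  by_cases hc : c 1 ≠ c 2 ∧ c 3 ≠ c 4
  · rw [if_pos hc]
    have hcard : (Finset.univ.filter
        (fun f : (Fin 5 ⊕ Fin s ⊕ Fin t) → Fin k => Pf s t k f ∧ f ∘ Sum.inl = c)).card =
        Fintype.card {f : (Fin 5 ⊕ Fin s ⊕ Fin t) → Fin k // Pf s t k f ∧ f ∘ Sum.inl = c} :=
      (Fintype.card_subtype _).symm
    rw [hcard, Fintype.card_congr (fiberEquiv c hc), Fintype.card_prod,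
      Fintype.card_fun, Fintype.card_fun, Fintype.card_subtype, Fintype.card_subtype]
    simp [w, Fintype.card_fin]
  · rw [if_neg hc]
    rw [Finset.card_eq_zero, Finset.filter_eq_empty_iff]
    intro f _
    rintro ⟨hPf, hfl⟩
    exact hc ⟨by rw [← congrFun hfl 1, ← congrFun hfl 2]; exact hPf.1.1,
      by rw [← congrFun hfl 3, ← congrFun hfl 4]; exact hPf.1.2⟩



variable {k : ℕ} {M : Type} [AddCommMonoid M]

def e5 (K : Type) : (Fin 5 → K) ≃ K × K × K × K × K where
  toFun c := (c 0, c 1, c 2, c 3, c 4)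
  invFun p := ![p.1, p.2.1, p.2.2.1, p.2.2.2.1, p.2.2.2.2]
  left_inv c := by funext i; fin_cases i <;> rfl
  right_inv p := rfl

lemma sum_fn5 (F : Fin k → Fin k → Fin k → Fin k → Fin k → M) :
    (∑ c : Fin 5 → Fin k, F (c 0) (c 1) (c 2) (c 3) (c 4)) =
      ∑ a : Fin k, ∑ b : Fin k, ∑ c : Fin k, ∑ d : Fin k, ∑ e : Fin k, F a b c d e := by
  rw [← Equiv.sum_comp (e5 (Fin k)).symm
    (fun c : Fin 5 → Fin k => F (c 0) (c 1) (c 2) (c 3) (c 4))]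
  rw [Fintype.sum_prod_type, ]
  refine Finset.sum_congr rfl fun a _ => ?_
  rw [Fintype.sum_prod_type]
  refine Finset.sum_congr rfl fun b _ => ?_
  rw [Fintype.sum_prod_type]
  refine Finset.sum_congr rfl fun c _ => ?_
  rw [Fintype.sum_prod_type]
  rfl

lemma sum_swap_pairs (f : Fin k → Fin k → Fin k → Fin k → M) :
    (∑ b : Fin k, ∑ c : Fin k, ∑ d : Fin k, ∑ e : Fin k, f b c d e) =
      ∑ b : Fin k, ∑ c : Fin k, ∑ d : Fin k, ∑ e : Fin k, f d e b c := by
  have h1 : (∑ b : Fin k, ∑ c : Fin k, ∑ d : Fin k, ∑ e : Fin k, f b c d e) =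
      ∑ b : Fin k, ∑ d : Fin k, ∑ c : Fin k, ∑ e : Fin k, f b c d e :=
    Finset.sum_congr rfl fun b _ => Finset.sum_comm
  have h2 : (∑ b : Fin k, ∑ d : Fin k, ∑ c : Fin k, ∑ e : Fin k, f b c d e) =
      ∑ d : Fin k, ∑ b : Fin k, ∑ c : Fin k, ∑ e : Fin k, f b c d e := Finset.sum_comm
  have h3 : (∑ d : Fin k, ∑ b : Fin k, ∑ c : Fin k, ∑ e : Fin k, f b c d e) =
      ∑ d : Fin k, ∑ b : Fin k, ∑ e : Fin k, ∑ c : Fin k, f b c d e :=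
    Finset.sum_congr rfl fun d _ => Finset.sum_congr rfl fun b _ => Finset.sum_comm
  have h4 : (∑ d : Fin k, ∑ b : Fin k, ∑ e : Fin k, ∑ c : Fin k, f b c d e) =
      ∑ d : Fin k, ∑ e : Fin k, ∑ b : Fin k, ∑ c : Fin k, f b c d e :=
    Finset.sum_congr rfl fun d _ => Finset.sum_comm
  rw [h1, h2, h3, h4]


variable (s t : ℕ)

lemma SA (s t : ℕ) :
    (∑ a : Fin k, ∑ b : Fin k, ∑ c : Fin k, ∑ d : Fin k, ∑ e : Fin k,
        ((w k a b d : ℕ) : ℝ) ^ s * ((w k a c e : ℕ) : ℝ) ^ t) =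
      (k : ℝ) * ((gR s k + ((k : ℝ) - 1) * hR s k) * (gR t k + ((k : ℝ) - 1) * hR t k)) := by
  have step1 : ∀ a b c : Fin k,
      (∑ d : Fin k, ∑ e : Fin k, ((w k a b d : ℕ) : ℝ) ^ s * ((w k a c e : ℕ) : ℝ) ^ t) =
        (if a = b then gR s k else hR s k) * (if a = c then gR t k else hR t k) := by
    intro a b c
    have he : ∀ d : Fin k, (∑ e : Fin k, ((w k a b d : ℕ) : ℝ) ^ s * ((w k a c e : ℕ) : ℝ) ^ t) =
        ((w k a b d : ℕ) : ℝ) ^ s * (if a = c then gR t k else hR t k) := fun d => by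
      rw [← Finset.mul_sum, sumW]
    rw [Finset.sum_congr rfl (fun d _ => he d), ← Finset.sum_mul, sumW]
  have step2 : ∀ a : Fin k,
      (∑ b : Fin k, ∑ c : Fin k, ∑ d : Fin k, ∑ e : Fin k,
          ((w k a b d : ℕ) : ℝ) ^ s * ((w k a c e : ℕ) : ℝ) ^ t) =
        (gR s k + ((k : ℝ) - 1) * hR s k) * (gR t k + ((k : ℝ) - 1) * hR t k) := by
    intro a
    have hb : ∀ b : Fin k, (∑ c : Fin k, ∑ d : Fin k, ∑ e : Fin k,
        ((w k a b d : ℕ) : ℝ) ^ s * ((w k a c e : ℕ) : ℝ) ^ t) =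
        (if a = b then gR s k else hR s k) * (gR t k + ((k : ℝ) - 1) * hR t k) := fun b => by
      rw [Finset.sum_congr rfl (fun c _ => step1 a b c), ← Finset.mul_sum, sum_indicator]
    rw [Finset.sum_congr rfl (fun b _ => hb b), ← Finset.sum_mul, sum_indicator]
  rw [Finset.sum_congr rfl (fun a _ => step2 a), Finset.sum_const, Finset.card_univ,
    Fintype.card_fin, nsmul_eq_mul]

lemma SB (s t : ℕ) :
    (∑ a : Fin k, ∑ b : Fin k, ∑ c : Fin k, ∑ d : Fin k, ∑ e : Fin k,
        if b = c then ((w k a b d : ℕ) : ℝ) ^ s * ((w k a c e : ℕ) : ℝ) ^ t else 0) =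
      (k : ℝ) * (gR s k * gR t k + ((k : ℝ) - 1) * (hR s k * hR t k)) := by
  have step1 : ∀ a b c : Fin k,
      (∑ d : Fin k, ∑ e : Fin k,
          if b = c then ((w k a b d : ℕ) : ℝ) ^ s * ((w k a c e : ℕ) : ℝ) ^ t else 0) =
        (if b = c then (if a = b then gR s k else hR s k) *
          (if a = c then gR t k else hR t k) else 0) := by
    intro a b c
    by_cases hbc : b = c
    · simp only [if_pos hbc]
      have he : ∀ d : Fin k, (∑ e : Fin k, ((w k a b d : ℕ) : ℝ) ^ s * ((w k a c e : ℕ) : ℝ) ^ t) =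
          ((w k a b d : ℕ) : ℝ) ^ s * (if a = c then gR t k else hR t k) := fun d => by
        rw [← Finset.mul_sum, sumW]
      rw [Finset.sum_congr rfl (fun d _ => he d), ← Finset.sum_mul, sumW]
    · simp [hbc]
  have step2 : ∀ a : Fin k,
      (∑ b : Fin k, ∑ c : Fin k, ∑ d : Fin k, ∑ e : Fin k,
          if b = c then ((w k a b d : ℕ) : ℝ) ^ s * ((w k a c e : ℕ) : ℝ) ^ t else 0) =
        gR s k * gR t k + ((k : ℝ) - 1) * (hR s k * hR t k) := by
    intro a
    have hb : ∀ b : Fin k, (∑ c : Fin k, ∑ d : Fin k, ∑ e : Fin k,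
        if b = c then ((w k a b d : ℕ) : ℝ) ^ s * ((w k a c e : ℕ) : ℝ) ^ t else 0) =
        (if a = b then gR s k * gR t k else hR s k * hR t k) := by
      intro b
      rw [Finset.sum_congr rfl (fun c _ => step1 a b c), Finset.sum_ite_eq,
        if_pos (Finset.mem_univ b)]
      by_cases hab : a = b <;> simp [hab]
    rw [Finset.sum_congr rfl (fun b _ => hb b), sum_indicator]
  rw [Finset.sum_congr rfl (fun a _ => step2 a), Finset.sum_const, Finset.card_univ,
    Fintype.card_fin, nsmul_eq_mul]

lemma SC (s t : ℕ) :
    (∑ a : Fin k, ∑ b : Fin k, ∑ c : Fin k, ∑ d : Fin k, ∑ e : Fin k,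
        if d = e then ((w k a b d : ℕ) : ℝ) ^ s * ((w k a c e : ℕ) : ℝ) ^ t else 0) =
      (k : ℝ) * (gR s k * gR t k + ((k : ℝ) - 1) * (hR s k * hR t k)) := by
  rw [← SB s t]
  refine Finset.sum_congr rfl fun a _ => ?_
  rw [sum_swap_pairs (fun b c d e => if d = e then
    ((w k a b d : ℕ) : ℝ) ^ s * ((w k a c e : ℕ) : ℝ) ^ t else 0)]
  refine Finset.sum_congr rfl fun b _ => Finset.sum_congr rfl fun c _ =>
    Finset.sum_congr rfl fun d _ => Finset.sum_congr rfl fun e _ => ?_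
  rw [w_comm23 a d b, w_comm23 a e c]

lemma SD (s t : ℕ) :
    (∑ a : Fin k, ∑ b : Fin k, ∑ c : Fin k, ∑ d : Fin k, ∑ e : Fin k,
        if b = c then (if d = e then
          ((w k a b d : ℕ) : ℝ) ^ s * ((w k a c e : ℕ) : ℝ) ^ t else 0) else 0) =
      (k : ℝ) * (gR (s + t) k + ((k : ℝ) - 1) * hR (s + t) k) := by
  have step1 : ∀ a b c d : Fin k,
      (∑ e : Fin k, if b = c then (if d = e then
          ((w k a b d : ℕ) : ℝ) ^ s * ((w k a c e : ℕ) : ℝ) ^ t else 0) else 0) =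
        (if b = c then ((w k a b d : ℕ) : ℝ) ^ s * ((w k a c d : ℕ) : ℝ) ^ t else 0) := by
    intro a b c d
    by_cases hbc : b = c
    · simp only [if_pos hbc]
      rw [Finset.sum_ite_eq, if_pos (Finset.mem_univ d)]
    · simp [hbc]
  have step2 : ∀ a : Fin k,
      (∑ b : Fin k, ∑ c : Fin k, ∑ d : Fin k, ∑ e : Fin k,
          if b = c then (if d = e then
            ((w k a b d : ℕ) : ℝ) ^ s * ((w k a c e : ℕ) : ℝ) ^ t else 0) else 0) =
        gR (s + t) k + ((k : ℝ) - 1) * hR (s + t) k := by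
    intro a
    have hb : ∀ b : Fin k, (∑ c : Fin k, ∑ d : Fin k, ∑ e : Fin k,
        if b = c then (if d = e then
          ((w k a b d : ℕ) : ℝ) ^ s * ((w k a c e : ℕ) : ℝ) ^ t else 0) else 0) =
        (if a = b then gR (s + t) k else hR (s + t) k) := by
      intro b
      have h1 : (∑ c : Fin k, ∑ d : Fin k, ∑ e : Fin k,
          if b = c then (if d = e then
            ((w k a b d : ℕ) : ℝ) ^ s * ((w k a c e : ℕ) : ℝ) ^ t else 0) else 0) =
          ∑ c : Fin k, ∑ d : Fin k,
            (if b = c then ((w k a b d : ℕ) : ℝ) ^ s * ((w k a c d : ℕ) : ℝ) ^ t else 0) :=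
        Finset.sum_congr rfl fun c _ => Finset.sum_congr rfl fun d _ => step1 a b c d
      rw [h1, Finset.sum_comm]
      have h2 : ∀ d : Fin k, (∑ c : Fin k,
          if b = c then ((w k a b d : ℕ) : ℝ) ^ s * ((w k a c d : ℕ) : ℝ) ^ t else 0) =
          ((w k a b d : ℕ) : ℝ) ^ (s + t) := by
        intro d
        rw [Finset.sum_ite_eq, if_pos (Finset.mem_univ b), pow_add]
      rw [Finset.sum_congr rfl (fun d _ => h2 d), sumW]
    rw [Finset.sum_congr rfl (fun b _ => hb b), sum_indicator]
  rw [Finset.sum_congr rfl (fun a _ => step2 a), Finset.sum_const, Finset.card_univ,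
    Fintype.card_fin, nsmul_eq_mul]

noncomputable def FR (s t : ℕ) (x : ℝ) : ℝ :=
  x * ((gR s x + (x - 1) * hR s x) * (gR t x + (x - 1) * hR t x))
    - 2 * (x * (gR s x * gR t x + (x - 1) * (hR s x * hR t x)))
    + x * (gR (s + t) x + (x - 1) * hR (s + t) x)

lemma mainEval (s t : ℕ) :
    (∑ a : Fin k, ∑ b : Fin k, ∑ c : Fin k, ∑ d : Fin k, ∑ e : Fin k,
        if b ≠ c ∧ d ≠ e then ((w k a b d : ℕ) : ℝ) ^ s * ((w k a c e : ℕ) : ℝ) ^ t else 0) =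
      FR s t (k : ℝ) := by
  have split : ∀ (b c d e : Fin k) (X : ℝ),
      (if b ≠ c ∧ d ≠ e then X else 0) =
        X - (if b = c then X else 0) - (if d = e then X else 0)
          + (if b = c then (if d = e then X else 0) else 0) := by
    intro b c d e X
    by_cases h1 : b = c <;> by_cases h2 : d = e <;> simp [h1, h2]
  have h0 : (∑ a : Fin k, ∑ b : Fin k, ∑ c : Fin k, ∑ d : Fin k, ∑ e : Fin k,
      if b ≠ c ∧ d ≠ e then ((w k a b d : ℕ) : ℝ) ^ s * ((w k a c e : ℕ) : ℝ) ^ t else 0) =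
      ∑ a : Fin k, ∑ b : Fin k, ∑ c : Fin k, ∑ d : Fin k, ∑ e : Fin k,
        (((w k a b d : ℕ) : ℝ) ^ s * ((w k a c e : ℕ) : ℝ) ^ t
          - (if b = c then ((w k a b d : ℕ) : ℝ) ^ s * ((w k a c e : ℕ) : ℝ) ^ t else 0)
          - (if d = e then ((w k a b d : ℕ) : ℝ) ^ s * ((w k a c e : ℕ) : ℝ) ^ t else 0)
          + (if b = c then (if d = e then
              ((w k a b d : ℕ) : ℝ) ^ s * ((w k a c e : ℕ) : ℝ) ^ t else 0) else 0)) :=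
    Finset.sum_congr rfl fun a _ => Finset.sum_congr rfl fun b _ =>
      Finset.sum_congr rfl fun c _ => Finset.sum_congr rfl fun d _ =>
        Finset.sum_congr rfl fun e _ => split b c d e _
  rw [h0]
  simp only [Finset.sum_add_distrib, Finset.sum_sub_distrib]
  rw [SA s t, SB s t, SC s t, SD s t, FR]
  ring


open Polynomial in
noncomputable def GP (m : ℕ) : Polynomial ℝ := (X - C 1) ^ m + (X - C 1) * (X - C 2) ^ m
open Polynomial in
noncomputable def HP (m : ℕ) : Polynomial ℝ := C 2 * (X - C 2) ^ m + (X - C 2) * (X - C 3) ^ m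

open Polynomial in
noncomputable def QP (s t : ℕ) : Polynomial ℝ :=
  X * ((GP s + (X - C 1) * HP s) * (GP t + (X - C 1) * HP t))
    - C 2 * (X * (GP s * GP t + (X - C 1) * (HP s * HP t)))
    + X * (GP (s + t) + (X - C 1) * HP (s + t))

open Polynomial in
lemma eval_QP (s t : ℕ) (x : ℝ) : (QP s t).eval x = FR s t x := by
  simp [QP, GP, HP, FR, gR, hR]

open Polynomial in
lemma deriv_QP (s t : ℕ) (hs : 3 ≤ s) (ht : 3 ≤ t) :
    (Polynomial.derivative (QP s t)).eval 2 =
      2 * ((-1 : ℝ) ^ s + (-1 : ℝ) ^ t + (-1 : ℝ) ^ (s + t)) := by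
  have z1 : (0 : ℝ) ^ s = 0 := zero_pow (by omega)
  have z2 : (0 : ℝ) ^ t = 0 := zero_pow (by omega)
  have z3 : (0 : ℝ) ^ (s + t) = 0 := zero_pow (by omega)
  have z4 : (0 : ℝ) ^ (s - 1) = 0 := zero_pow (by omega)
  have z5 : (0 : ℝ) ^ (t - 1) = 0 := zero_pow (by omega)
  have z6 : (0 : ℝ) ^ (s + t - 1) = 0 := zero_pow (by omega)
  simp only [QP, GP, HP, derivative_add, derivative_sub, derivative_mul, derivative_pow,
    derivative_X, derivative_C, derivative_one, eval_add, eval_sub, eval_mul, eval_pow,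
    eval_X, eval_C, eval_one, eval_natCast]
  norm_num [z1, z2, z3, z4, z5, z6]
  ring

end XPf

/-- For all `s, t ≥ 3`, the derivative of the chromatic polynomial of `X(s,t)` evaluated at
`x = 2` equals `2((-1)^s + (-1)^t + (-1)^(s+t))`. -/
theorem derivative_chromaticPolynomial_graphX_at_two (s t : ℕ) (hs : 3 ≤ s) (ht : 3 ≤ t)
    (P : Polynomial ℝ) (hP : IsChromaticPolynomial (graphX s t) P) :
    (Polynomial.derivative P).eval 2 =
      2 * ((-1 : ℝ) ^ s + (-1 : ℝ) ^ t + (-1 : ℝ) ^ (s + t)) := by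
  have chrom : ∀ k : ℕ, P.eval (k : ℝ) = (XPf.QP s t).eval (k : ℝ) := by
    intro k
    rw [hP k, XPf.eval_QP, XPf.numColorings_eq]
    push_cast
    rw [XPf.sum_fn5 (fun a b c d e => if b ≠ c ∧ d ≠ e then
      ((XPf.w k a b d : ℕ) : ℝ) ^ s * ((XPf.w k a c e : ℕ) : ℝ) ^ t else 0)]
    exact XPf.mainEval s t
  have hPQ : P = XPf.QP s t :=
    Polynomial.eq_of_infinite_eval_eq _ _
      (Set.infinite_of_injective_forall_mem (f := fun n : ℕ => (n : ℝ))
        Nat.cast_injective (fun n => chrom n))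
  rw [hPQ]
  exact XPf.deriv_QP s t hs ht
end

section
/- For all odd integers s, t ≥ 3, the derivative of the chromatic polynomial of X(s,t) evaluated at x = 2 equals -2; in particular the chromatic polynomial of X(s,t) is strictly positive on some interval (2 - β, 2) with β > 0. -/
/-! ### Auxiliary real functions -/

open Finset Polynomial

def fA (x : ℝ) (m : ℕ) : ℝ := (x-1)^m + 3*((x-1)*(x-2)^m) + (x-1)*((x-2)*(x-3)^m)
def fC (x : ℝ) (m : ℕ) : ℝ := (x-1)^m + (x-1)*(x-2)^m
def fD (x : ℝ) (m : ℕ) : ℝ := 2*(x-2)^m + (x-2)*(x-3)^m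
def fQ (x : ℝ) (s t : ℕ) : ℝ :=
  x*(fA x s * fA x t) - 2*(x*(fC x s * fC x t + (x-1)*(fD x s * fD x t))) + x * fA x (s+t)

def uu (k m : ℕ) (a b d : Fin k) : ℝ := ((k:ℝ) - (({a,b,d} : Finset (Fin k)).card : ℝ))^m

/-! ### Summation lemmas -/

lemma sumE {k : ℕ} (m : ℕ) (a x : Fin k) :
    ∑ d : Fin k, uu k m a x d = if x = a then fC k m else fD k m := by
  have hk : 1 ≤ k := a.pos
  by_cases hxa : x = a
  · rw [hxa, if_pos rfl,
      ← Finset.add_sum_erase Finset.univ (fun d => uu k m a a d) (Finset.mem_univ a)]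
    have h1 : uu k m a a a = ((k:ℝ) - 1)^m := by simp [uu]
    have h2 : ∀ d ∈ Finset.univ.erase a, uu k m a a d = ((k:ℝ) - 2)^m := by
      intro d hd
      have hdx : d ≠ a := Finset.ne_of_mem_erase hd
      have hc : ({a, d} : Finset (Fin k)).card = 2 := Finset.card_pair (fun h => hdx h.symm)
      simp [uu, hc]
    rw [h1, Finset.sum_congr rfl h2, Finset.sum_const,
      Finset.card_erase_of_mem (Finset.mem_univ a), Finset.card_univ, Fintype.card_fin,
      nsmul_eq_mul, Nat.cast_sub hk, Nat.cast_one]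
    simp only [fC]
  · rw [if_neg hxa,
      ← Finset.sum_sdiff (Finset.subset_univ ({a, x} : Finset (Fin k)))]
    have hax : a ≠ x := fun h => hxa h.symm
    have hpair : ({a, x} : Finset (Fin k)).card = 2 := Finset.card_pair hax
    have hk2 : 2 ≤ k := by
      have := Finset.card_le_univ ({a, x} : Finset (Fin k))
      rwa [hpair, Fintype.card_fin] at this
    have h3 : ∀ d ∈ Finset.univ \ ({a, x} : Finset (Fin k)), uu k m a x d = ((k:ℝ) - 3)^m := by
      intro d hd
      simp only [Finset.mem_sdiff, Finset.mem_univ, true_and, Finset.mem_insert,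
        Finset.mem_singleton] at hd
      push_neg at hd
      have hc : ({a, x, d} : Finset (Fin k)).card = 3 :=
        Finset.card_eq_three.mpr ⟨a, x, d, hax, (fun h => hd.1 h.symm), (fun h => hd.2 h.symm), rfl⟩
      simp [uu, hc]
    have ha' : uu k m a x a = ((k:ℝ) - 2)^m := by
      have hset : ({a, x, a} : Finset (Fin k)) = {a, x} := by
        rw [Finset.pair_comm x a, Finset.insert_idem]
      simp [uu, hset, hpair]
    have hx' : uu k m a x x = ((k:ℝ) - 2)^m := by
      have hset : ({a, x, x} : Finset (Fin k)) = {a, x} := by rw [Finset.pair_eq_singleton]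
      simp [uu, hset, hpair]
    rw [Finset.sum_congr rfl h3, Finset.sum_const, Finset.sum_pair hax, ha', hx',
      Finset.card_sdiff_of_subset (Finset.subset_univ _), Finset.card_univ, Fintype.card_fin, hpair,
      nsmul_eq_mul, Nat.cast_sub hk2]
    simp only [fD]
    push_cast
    ring

lemma sumE' {k : ℕ} (m : ℕ) (a x : Fin k) :
    ∑ b : Fin k, uu k m a b x = if x = a then fC k m else fD k m := by
  rw [← sumE m a x]
  refine Finset.sum_congr rfl fun b _ => ?_
  have hset : ({a, b, x} : Finset (Fin k)) = {a, x, b} := by rw [Finset.pair_comm b x]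
  simp [uu, hset]

lemma sum_ite_card {k : ℕ} (a : Fin k) (p q : ℝ) :
    ∑ b : Fin k, (if b = a then p else q) = p + ((k:ℝ) - 1) * q := by
  have hk : 1 ≤ k := a.pos
  rw [← Finset.add_sum_erase Finset.univ _ (Finset.mem_univ a), if_pos rfl]
  congr 1
  rw [Finset.sum_congr rfl (fun b hb => if_neg (Finset.ne_of_mem_erase hb)), Finset.sum_const,
    Finset.card_erase_of_mem (Finset.mem_univ a), Finset.card_univ, Fintype.card_fin,
    nsmul_eq_mul, Nat.cast_sub hk, Nat.cast_one]

lemma sumA {k : ℕ} (m : ℕ) (a : Fin k) :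
    ∑ b : Fin k, ∑ d : Fin k, uu k m a b d = fA k m := by
  rw [Finset.sum_congr rfl fun b _ => sumE m a b, sum_ite_card a]
  simp only [fA, fC, fD]
  ring

lemma pair_factor {k : ℕ} (f g : Fin k → ℝ) :
    ∑ d : Fin k, ∑ e : Fin k, f d * g e = (∑ d : Fin k, f d) * (∑ e : Fin k, g e) := by
  simp only [Finset.sum_mul, Finset.mul_sum]
  exact Finset.sum_comm

lemma tri_factor {k : ℕ} (f g : Fin k → Fin k → ℝ) :
    ∑ b : Fin k, ∑ c : Fin k, ∑ d : Fin k, f b d * g c d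
      = ∑ d : Fin k, (∑ b : Fin k, f b d) * (∑ c : Fin k, g c d) := by
  have h1 : ∀ b : Fin k, ∑ c : Fin k, ∑ d : Fin k, f b d * g c d
      = ∑ d : Fin k, ∑ c : Fin k, f b d * g c d := fun b => Finset.sum_comm
  rw [Finset.sum_congr rfl fun b _ => h1 b, Finset.sum_comm]
  simp only [Finset.sum_mul, Finset.mul_sum]
  exact Finset.sum_congr rfl fun d _ => Finset.sum_comm

lemma offdiag_sum {k : ℕ} (F : Fin k → Fin k → ℝ) :
    ∑ b : Fin k, ∑ c : Fin k, (if b = c then (0:ℝ) else 1) * F b c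
      = (∑ b : Fin k, ∑ c : Fin k, F b c) - ∑ b : Fin k, F b b := by
  have h : ∀ b c : Fin k, (if b = c then (0:ℝ) else 1) * F b c
      = F b c - (if b = c then F b c else 0) := by
    intro b c; split_ifs <;> ring
  simp only [h, Finset.sum_sub_distrib, Finset.sum_ite_eq, Finset.mem_univ, if_true]

lemma quintuple_sum (s t k : ℕ) :
    (∑ a : Fin k, ∑ b : Fin k, ∑ c : Fin k, ∑ d : Fin k, ∑ e : Fin k,
        (if b = c then (0:ℝ) else 1) * ((if d = e then (0:ℝ) else 1) *
          (uu k s a b d * uu k t a c e)))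
      = fQ k s t := by
  have inner : ∀ a : Fin k,
      (∑ b : Fin k, ∑ c : Fin k, ∑ d : Fin k, ∑ e : Fin k,
        (if b = c then (0:ℝ) else 1) * ((if d = e then (0:ℝ) else 1) *
          (uu k s a b d * uu k t a c e)))
      = fA k s * fA k t - 2*(fC k s * fC k t + ((k:ℝ)-1)*(fD k s * fD k t)) + fA k (s+t) := by
    intro a
    have hbc : ∀ b c : Fin k,
        (∑ d : Fin k, ∑ e : Fin k,
          (if b = c then (0:ℝ) else 1) * ((if d = e then (0:ℝ) else 1) *
            (uu k s a b d * uu k t a c e)))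
        = (if b = c then (0:ℝ) else 1) *
            ((∑ d : Fin k, uu k s a b d) * (∑ e : Fin k, uu k t a c e)
              - ∑ d : Fin k, uu k s a b d * uu k t a c d) := by
      intro b c
      simp only [← Finset.mul_sum]
      congr 1
      rw [offdiag_sum (fun d e => uu k s a b d * uu k t a c e), pair_factor]
    rw [Finset.sum_congr rfl fun b _ => Finset.sum_congr rfl fun c _ => hbc b c,
      offdiag_sum (fun b c => (∑ d : Fin k, uu k s a b d) * (∑ e : Fin k, uu k t a c e)
        - ∑ d : Fin k, uu k s a b d * uu k t a c d)]
    simp only [Finset.sum_sub_distrib]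
    have h1 : ∑ b : Fin k, ∑ c : Fin k,
        (∑ d : Fin k, uu k s a b d) * (∑ e : Fin k, uu k t a c e) = fA k s * fA k t := by
      rw [pair_factor (fun b => ∑ d : Fin k, uu k s a b d) (fun c => ∑ e : Fin k, uu k t a c e),
        sumA s a, sumA t a]
    have h2 : ∑ b : Fin k, ∑ c : Fin k, ∑ d : Fin k, uu k s a b d * uu k t a c d
        = fC k s * fC k t + ((k:ℝ)-1) * (fD k s * fD k t) := by
      rw [tri_factor (fun b d => uu k s a b d) (fun c d => uu k t a c d)]
      have hd : ∀ d : Fin k, (∑ b : Fin k, uu k s a b d) * (∑ c : Fin k, uu k t a c d)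
          = if d = a then fC k s * fC k t else fD k s * fD k t := by
        intro d
        rw [sumE' s a d, sumE' t a d]
        split_ifs <;> ring
      rw [Finset.sum_congr rfl fun d _ => hd d, sum_ite_card a]
    have h3 : ∑ b : Fin k, (∑ d : Fin k, uu k s a b d) * (∑ e : Fin k, uu k t a b e)
        = fC k s * fC k t + ((k:ℝ)-1) * (fD k s * fD k t) := by
      have hb : ∀ b : Fin k, (∑ d : Fin k, uu k s a b d) * (∑ e : Fin k, uu k t a b e)
          = if b = a then fC k s * fC k t else fD k s * fD k t := by
        intro b
        rw [sumE s a b, sumE t a b]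
        split_ifs <;> ring
      rw [Finset.sum_congr rfl fun b _ => hb b, sum_ite_card a]
    have h4 : ∑ b : Fin k, ∑ d : Fin k, uu k s a b d * uu k t a b d = fA k (s+t) := by
      have hbd : ∀ b d : Fin k, uu k s a b d * uu k t a b d = uu k (s+t) a b d := by
        intro b d; simp only [uu]; rw [← pow_add]
      rw [Finset.sum_congr rfl fun b _ => Finset.sum_congr rfl fun d _ => hbd b d, sumA (s+t) a]
    rw [h1, h2, h3, h4]
    ring
  rw [Finset.sum_congr rfl fun a _ => inner a, Finset.sum_const, Finset.card_univ,
    Fintype.card_fin, nsmul_eq_mul]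
  simp only [fQ]
  ring

/-! ### Characterization of proper colorings of `graphX` -/

lemma graphX_adj_characterization (s t k : ℕ) (f : Fin 5 ⊕ Fin s ⊕ Fin t → Fin k) :
    (∀ u v, (graphX s t).Adj u v → f u ≠ f v) ↔
      ((f (Sum.inl 1) ≠ f (Sum.inl 2) ∧ f (Sum.inl 3) ≠ f (Sum.inl 4)) ∧
        ((∀ i : Fin s, f (Sum.inr (Sum.inl i)) ≠ f (Sum.inl 0) ∧
            f (Sum.inr (Sum.inl i)) ≠ f (Sum.inl 1) ∧ f (Sum.inr (Sum.inl i)) ≠ f (Sum.inl 3)) ∧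
          (∀ j : Fin t, f (Sum.inr (Sum.inr j)) ≠ f (Sum.inl 0) ∧
            f (Sum.inr (Sum.inr j)) ≠ f (Sum.inl 2) ∧ f (Sum.inr (Sum.inr j)) ≠ f (Sum.inl 4)))) := by
  have adj : ∀ u v : Fin 5 ⊕ Fin s ⊕ Fin t, u ≠ v → (XAdj s t u v ∨ XAdj s t v u) →
      (graphX s t).Adj u v := fun u v h1 h2 => ⟨h1, h2⟩
  constructor
  · intro h
    exact ⟨⟨h _ _ (adj _ _ (by simp) (Or.inl (Or.inl ⟨rfl, rfl⟩))),
            h _ _ (adj _ _ (by simp) (Or.inl (Or.inr (Or.inl ⟨rfl, rfl⟩))))⟩,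
          fun i => ⟨h _ _ (adj _ _ (by simp) (Or.inl (Or.inr (Or.inr (Or.inl ⟨⟨i, rfl⟩, Or.inl rfl⟩))))),
                    h _ _ (adj _ _ (by simp) (Or.inl (Or.inr (Or.inr (Or.inl ⟨⟨i, rfl⟩, Or.inr (Or.inl rfl)⟩))))),
                    h _ _ (adj _ _ (by simp) (Or.inl (Or.inr (Or.inr (Or.inl ⟨⟨i, rfl⟩, Or.inr (Or.inr rfl)⟩)))))⟩,
          fun j => ⟨h _ _ (adj _ _ (by simp) (Or.inl (Or.inr (Or.inr (Or.inr ⟨⟨j, rfl⟩, Or.inl rfl⟩))))),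
                    h _ _ (adj _ _ (by simp) (Or.inl (Or.inr (Or.inr (Or.inr ⟨⟨j, rfl⟩, Or.inr (Or.inl rfl)⟩))))),
                    h _ _ (adj _ _ (by simp) (Or.inl (Or.inr (Or.inr (Or.inr ⟨⟨j, rfl⟩, Or.inr (Or.inr rfl)⟩)))))⟩⟩
  · rintro ⟨⟨h12, h34⟩, hS, hT⟩ u v hadj
    obtain ⟨hne, h | h⟩ := (hadj : u ≠ v ∧ (XAdj s t u v ∨ XAdj s t v u))
    · simp only [XAdj] at h
      rcases h with ⟨rfl, rfl⟩ | ⟨rfl, rfl⟩ | ⟨⟨i, rfl⟩, (rfl | rfl | rfl)⟩ |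
        ⟨⟨j, rfl⟩, (rfl | rfl | rfl)⟩
      exacts [h12, h34, (hS i).1, (hS i).2.1, (hS i).2.2, (hT j).1, (hT j).2.1, (hT j).2.2]
    · simp only [XAdj] at h
      rcases h with ⟨rfl, rfl⟩ | ⟨rfl, rfl⟩ | ⟨⟨i, rfl⟩, (rfl | rfl | rfl)⟩ |
        ⟨⟨j, rfl⟩, (rfl | rfl | rfl)⟩
      exacts [h12.symm, h34.symm, (hS i).1.symm, (hS i).2.1.symm, (hS i).2.2.symm,
        (hT j).1.symm, (hT j).2.1.symm, (hT j).2.2.symm]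

/-! ### Counting the colorings -/

lemma card_notmem_triple {k : ℕ} (x y z : Fin k) :
    Fintype.card {c : Fin k // c ≠ x ∧ c ≠ y ∧ c ≠ z}
      = k - ({x, y, z} : Finset (Fin k)).card := by
  rw [Fintype.card_subtype]
  have hfil : Finset.univ.filter (fun c : Fin k => c ≠ x ∧ c ≠ y ∧ c ≠ z)
      = ({x, y, z} : Finset (Fin k))ᶜ := by
    ext c
    simp [not_or]
  rw [hfil, Finset.card_compl, Fintype.card_fin]

lemma numColorings_nat (s t k : ℕ) :
    numColorings (graphX s t) k =
      ∑ g : Fin 5 → Fin k,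
        if g 1 ≠ g 2 ∧ g 3 ≠ g 4 then
          (k - ({g 0, g 1, g 3} : Finset (Fin k)).card)^s *
          (k - ({g 0, g 2, g 4} : Finset (Fin k)).card)^t
        else 0 := by
  rw [numColorings]
  have E : {f : Fin 5 ⊕ Fin s ⊕ Fin t → Fin k // ∀ u v, (graphX s t).Adj u v → f u ≠ f v}
      ≃ Σ g : Fin 5 → Fin k, {h : Fin s ⊕ Fin t → Fin k //
          (g 1 ≠ g 2 ∧ g 3 ≠ g 4) ∧
          ((∀ i : Fin s, h (Sum.inl i) ≠ g 0 ∧ h (Sum.inl i) ≠ g 1 ∧ h (Sum.inl i) ≠ g 3) ∧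
           (∀ j : Fin t, h (Sum.inr j) ≠ g 0 ∧ h (Sum.inr j) ≠ g 2 ∧ h (Sum.inr j) ≠ g 4))} :=
    (Equiv.subtypeEquivRight (graphX_adj_characterization s t k)).trans
      (((Equiv.sumArrowEquivProdArrow (Fin 5) (Fin s ⊕ Fin t) (Fin k)).subtypeEquiv
          (fun f => Iff.rfl)).trans
        (Equiv.subtypeProdEquivSigmaSubtype
          (fun (g : Fin 5 → Fin k) (h : Fin s ⊕ Fin t → Fin k) =>
            (g 1 ≠ g 2 ∧ g 3 ≠ g 4) ∧
            ((∀ i : Fin s, h (Sum.inl i) ≠ g 0 ∧ h (Sum.inl i) ≠ g 1 ∧ h (Sum.inl i) ≠ g 3) ∧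
             (∀ j : Fin t, h (Sum.inr j) ≠ g 0 ∧ h (Sum.inr j) ≠ g 2 ∧ h (Sum.inr j) ≠ g 4)))))
  rw [Nat.card_congr E, Nat.card_eq_fintype_card, Fintype.card_sigma]
  refine Finset.sum_congr rfl fun g _ => ?_
  by_cases hg : g 1 ≠ g 2 ∧ g 3 ≠ g 4
  · rw [if_pos hg]
    have E2 : {h : Fin s ⊕ Fin t → Fin k //
        (g 1 ≠ g 2 ∧ g 3 ≠ g 4) ∧
        ((∀ i : Fin s, h (Sum.inl i) ≠ g 0 ∧ h (Sum.inl i) ≠ g 1 ∧ h (Sum.inl i) ≠ g 3) ∧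
         (∀ j : Fin t, h (Sum.inr j) ≠ g 0 ∧ h (Sum.inr j) ≠ g 2 ∧ h (Sum.inr j) ≠ g 4))}
        ≃ (Fin s → {c : Fin k // c ≠ g 0 ∧ c ≠ g 1 ∧ c ≠ g 3}) ×
          (Fin t → {c : Fin k // c ≠ g 0 ∧ c ≠ g 2 ∧ c ≠ g 4}) :=
      (Equiv.subtypeEquivRight (fun h => and_iff_right hg)).trans
        (((Equiv.sumArrowEquivProdArrow (Fin s) (Fin t) (Fin k)).subtypeEquiv
            (fun h => Iff.rfl)).trans
          ((Equiv.subtypeProdEquivProd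
              (p := fun u : Fin s → Fin k => ∀ i : Fin s, u i ≠ g 0 ∧ u i ≠ g 1 ∧ u i ≠ g 3)
              (q := fun v : Fin t → Fin k => ∀ j : Fin t, v j ≠ g 0 ∧ v j ≠ g 2 ∧ v j ≠ g 4)).trans
            (Equiv.prodCongr
              (Equiv.subtypePiEquivPi
                (p := fun (_ : Fin s) (c : Fin k) => c ≠ g 0 ∧ c ≠ g 1 ∧ c ≠ g 3))
              (Equiv.subtypePiEquivPi
                (p := fun (_ : Fin t) (c : Fin k) => c ≠ g 0 ∧ c ≠ g 2 ∧ c ≠ g 4)))))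
    rw [Fintype.card_congr E2, Fintype.card_prod, Fintype.card_fun, Fintype.card_fun,
      Fintype.card_fin, Fintype.card_fin, card_notmem_triple, card_notmem_triple]
  · rw [if_neg hg]
    exact Fintype.card_eq_zero_iff.mpr ⟨fun x => hg x.2.1⟩

/-! ### The sum over `Fin 5 → Fin k` as a quintuple sum -/

def e5 (k : ℕ) : (Fin k × Fin k × Fin k × Fin k × Fin k) ≃ (Fin 5 → Fin k) where
  toFun p := ![p.1, p.2.1, p.2.2.1, p.2.2.2.1, p.2.2.2.2]
  invFun g := (g 0, g 1, g 2, g 3, g 4)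
  left_inv p := rfl
  right_inv g := by
    funext i
    fin_cases i <;> rfl

lemma sum_fun5 {M : Type} [AddCommMonoid M] (k : ℕ)
    (F : Fin k → Fin k → Fin k → Fin k → Fin k → M) :
    ∑ g : Fin 5 → Fin k, F (g 0) (g 1) (g 2) (g 3) (g 4)
      = ∑ a : Fin k, ∑ b : Fin k, ∑ c : Fin k, ∑ d : Fin k, ∑ e : Fin k, F a b c d e := by
  rw [← Equiv.sum_comp (e5 k) (fun g => F (g 0) (g 1) (g 2) (g 3) (g 4))]
  simp only [Fintype.sum_prod_type]
  rfl

lemma numColorings_real (s t k : ℕ) :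
    (numColorings (graphX s t) k : ℝ)
      = ∑ a : Fin k, ∑ b : Fin k, ∑ c : Fin k, ∑ d : Fin k, ∑ e : Fin k,
          (if b = c then (0:ℝ) else 1) * ((if d = e then (0:ℝ) else 1) *
            (uu k s a b d * uu k t a c e)) := by
  rw [numColorings_nat, Nat.cast_sum]
  rw [sum_fun5 k (fun a b c d e => ((if b ≠ c ∧ d ≠ e then
      (k - ({a, b, d} : Finset (Fin k)).card)^s * (k - ({a, c, e} : Finset (Fin k)).card)^t
    else 0 : ℕ) : ℝ))]
  refine Finset.sum_congr rfl fun a _ => Finset.sum_congr rfl fun b _ =>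
    Finset.sum_congr rfl fun c _ => Finset.sum_congr rfl fun d _ =>
    Finset.sum_congr rfl fun e _ => ?_
  have hA : (({a, b, d} : Finset (Fin k)).card) ≤ k := by
    have := Finset.card_le_univ ({a, b, d} : Finset (Fin k))
    rwa [Fintype.card_fin] at this
  have hB : (({a, c, e} : Finset (Fin k)).card) ≤ k := by
    have := Finset.card_le_univ ({a, c, e} : Finset (Fin k))
    rwa [Fintype.card_fin] at this
  by_cases h1 : b = c
  · simp [h1]
  · by_cases h2 : d = e
    · simp [h1, h2]
    · rw [if_pos ⟨h1, h2⟩, if_neg h1, if_neg h2]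
      rw [Nat.cast_mul, Nat.cast_pow, Nat.cast_pow, Nat.cast_sub hA, Nat.cast_sub hB]
      simp only [uu]
      ring

/-! ### The chromatic polynomial of `graphX` -/

noncomputable def pA (m : ℕ) : Polynomial ℝ :=
  (X - 1)^m + 3*((X-1)*(X-2)^m) + (X-1)*((X-2)*(X-3)^m)
noncomputable def pC (m : ℕ) : Polynomial ℝ := (X - 1)^m + (X-1)*(X-2)^m
noncomputable def pD (m : ℕ) : Polynomial ℝ := 2*(X-2)^m + (X-2)*(X-3)^m
noncomputable def pQ (s t : ℕ) : Polynomial ℝ :=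
  X*(pA s * pA t) - 2*(X*(pC s * pC t + (X-1)*(pD s * pD t))) + X * pA (s+t)

lemma pA_eval (m : ℕ) (x : ℝ) : (pA m).eval x = fA x m := by simp [pA, fA]
lemma pC_eval (m : ℕ) (x : ℝ) : (pC m).eval x = fC x m := by simp [pC, fC]
lemma pD_eval (m : ℕ) (x : ℝ) : (pD m).eval x = fD x m := by simp [pD, fD]
lemma pQ_eval (s t : ℕ) (x : ℝ) : (pQ s t).eval x = fQ x s t := by
  simp [pQ, fQ, pA_eval, pC_eval, pD_eval]

lemma pQ_is_chromatic (s t : ℕ) (k : ℕ) :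
    (pQ s t).eval (k : ℝ) = (numColorings (graphX s t) k : ℝ) := by
  rw [pQ_eval, numColorings_real]
  exact (quintuple_sum s t k).symm

/-! ### Values and derivatives at `2` -/

lemma pA_eval2 (m : ℕ) (hm : m ≠ 0) : (pA m).eval 2 = 1 := by
  rw [pA_eval]
  norm_num [fA, zero_pow hm]

lemma pC_eval2 (m : ℕ) (hm : m ≠ 0) : (pC m).eval 2 = 1 := by
  rw [pC_eval]
  norm_num [fC, zero_pow hm]

lemma pD_eval2 (m : ℕ) (hm : m ≠ 0) : (pD m).eval 2 = 0 := by
  rw [pD_eval]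
  norm_num [fD, zero_pow hm]

lemma pA_deriv2 (m : ℕ) (hm : 2 ≤ m) :
    (Polynomial.derivative (pA m)).eval 2 = (m : ℝ) + (-1)^m := by
  have h0 : m ≠ 0 := by omega
  have h1 : m - 1 ≠ 0 := by omega
  simp only [pA, derivative_add, derivative_mul, derivative_pow, derivative_sub, derivative_X,
    derivative_one, derivative_ofNat, eval_add, eval_mul, eval_sub, eval_pow, eval_X, eval_one,
    eval_ofNat, eval_natCast, eval_C]
  norm_num [zero_pow h0, zero_pow h1]

lemma pC_deriv2 (m : ℕ) (hm : 2 ≤ m) :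
    (Polynomial.derivative (pC m)).eval 2 = (m : ℝ) := by
  have h0 : m ≠ 0 := by omega
  have h1 : m - 1 ≠ 0 := by omega
  simp only [pC, derivative_add, derivative_mul, derivative_pow, derivative_sub, derivative_X,
    derivative_one, derivative_ofNat, eval_add, eval_mul, eval_sub, eval_pow, eval_X, eval_one,
    eval_ofNat, eval_natCast, eval_C]
  norm_num [zero_pow h0, zero_pow h1]

lemma pD_deriv2 (m : ℕ) (hm : 2 ≤ m) :
    (Polynomial.derivative (pD m)).eval 2 = (-1)^m := by
  have h0 : m ≠ 0 := by omega
  have h1 : m - 1 ≠ 0 := by omega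
  simp only [pD, derivative_add, derivative_mul, derivative_pow, derivative_sub, derivative_X,
    derivative_one, derivative_ofNat, eval_add, eval_mul, eval_sub, eval_pow, eval_X, eval_one,
    eval_ofNat, eval_natCast, eval_C]
  norm_num [zero_pow h0, zero_pow h1]

lemma pQ_deriv2 (s t : ℕ) (hs : 3 ≤ s) (ht : 3 ≤ t) (hso : Odd s) (hto : Odd t) :
    (Polynomial.derivative (pQ s t)).eval 2 = -2 := by
  have hs2 : 2 ≤ s := by omega
  have ht2 : 2 ≤ t := by omega
  have hst2 : 2 ≤ s + t := by omega
  have hstE : Even (s + t) := hso.add_odd hto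
  simp only [pQ, derivative_add, derivative_sub, derivative_mul, derivative_X, derivative_one,
    derivative_ofNat, eval_add, eval_sub, eval_mul, eval_X, eval_one, eval_ofNat, eval_zero,
    pA_eval2 s (by omega), pA_eval2 t (by omega), pA_eval2 (s+t) (by omega),
    pC_eval2 s (by omega), pC_eval2 t (by omega),
    pD_eval2 s (by omega), pD_eval2 t (by omega),
    pA_deriv2 s hs2, pA_deriv2 t ht2, pA_deriv2 (s+t) hst2,
    pC_deriv2 s hs2, pC_deriv2 t ht2, pD_deriv2 s hs2, pD_deriv2 t ht2,
    hso.neg_one_pow, hto.neg_one_pow, hstE.neg_one_pow]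
  push_cast
  ring

lemma pQ_eval2 (s t : ℕ) (hs : 3 ≤ s) (ht : 3 ≤ t) : (pQ s t).eval 2 = 0 := by
  rw [pQ_eval]
  norm_num [fQ, fA, fC, fD, zero_pow (show s ≠ 0 by omega), zero_pow (show t ≠ 0 by omega),
    zero_pow (show s + t ≠ 0 by omega)]

/-- For all odd `s, t ≥ 3`, the derivative of the chromatic polynomial of `X(s,t)` evaluated
at `x = 2` equals `-2`; in particular the chromatic polynomial of `X(s,t)` is strictly
positive on some interval `(2 - β, 2)` with `β > 0`. -/
theorem derivative_chromaticPolynomial_graphX_at_two_of_odd (s t : ℕ) (hs : 3 ≤ s) (ht : 3 ≤ t)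
    (hsodd : Odd s) (htodd : Odd t)
    (P : Polynomial ℝ) (hP : IsChromaticPolynomial (graphX s t) P) :
    (Polynomial.derivative P).eval 2 = -2 ∧
      ∃ β : ℝ, 0 < β ∧ ∀ x : ℝ, 2 - β < x → x < 2 → 0 < P.eval x := by
  have hPQ : P = pQ s t := by
    apply Polynomial.eq_of_infinite_eval_eq
    apply Set.infinite_of_injective_forall_mem (f := (fun n : ℕ => (n : ℝ)))
      Nat.cast_injective
    intro n
    show P.eval (n : ℝ) = (pQ s t).eval (n : ℝ)
    rw [hP n, pQ_is_chromatic s t n]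
  have hd2 : (Polynomial.derivative P).eval 2 = -2 := by
    rw [hPQ]; exact pQ_deriv2 s t hs ht hsodd htodd
  refine ⟨hd2, ?_⟩
  have hP2 : P.eval 2 = 0 := by rw [hPQ]; exact pQ_eval2 s t hs ht
  have hder : HasDerivAt (fun x : ℝ => P.eval x) (-2) 2 := by
    have h := P.hasDerivAt (2 : ℝ)
    rwa [hd2] at h
  have hslope := hasDerivAt_iff_tendsto_slope.mp hder
  have hev : ∀ᶠ x in nhdsWithin 2 {(2:ℝ)}ᶜ, slope (fun x => P.eval x) 2 x < -1 :=
    hslope.eventually (gt_mem_nhds (by norm_num : (-2:ℝ) < -1))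
  have hev' : ∀ᶠ x in nhdsWithin 2 (Set.Iio 2), slope (fun x => P.eval x) 2 x < -1 :=
    hev.filter_mono (nhdsWithin_mono 2 (fun x hx => by
      simpa using ne_of_lt (show x < 2 from hx)))
  obtain ⟨l, hl, hsub⟩ := mem_nhdsLT_iff_exists_Ioo_subset.mp
    (Filter.eventually_iff.mp hev')
  refine ⟨2 - l, by simpa using Set.mem_Iio.mp hl, fun x hx1 hx2 => ?_⟩
  have hxI : x ∈ Set.Ioo l 2 := ⟨by linarith, hx2⟩
  have hle : slope (fun x => P.eval x) 2 x < -1 := hsub hxI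
  rw [slope_def_field, hP2, sub_zero] at hle
  have hneg : x - 2 < 0 := by linarith
  rw [div_lt_iff_of_neg hneg] at hle
  linarith
end

section
/- For all odd integers s, t ≥ 3, the chromatic polynomial of X(s,t) has a real root strictly between 1 and 2. (Together with the 3-connectivity and non-bipartiteness of X(s,t), this refutes Jackson's conjecture that a 3-connected graph which is not bipartite of odd order has no chromatic roots in (1,2).) -/
/-! ### Auxiliary material -/

set_option maxHeartbeats 2000000

open Finset Polynomial

namespace GraphXAux

lemma proper_iff {s t k : ℕ} (f : (Fin 5 ⊕ Fin s ⊕ Fin t) → Fin k) :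
    (∀ u v, (graphX s t).Adj u v → f u ≠ f v) ↔
      (f (.inl 1) ≠ f (.inl 2) ∧ f (.inl 3) ≠ f (.inl 4) ∧
       (∀ i : Fin s, f (.inr (.inl i)) ≠ f (.inl 0) ∧ f (.inr (.inl i)) ≠ f (.inl 1) ∧
          f (.inr (.inl i)) ≠ f (.inl 3)) ∧
       (∀ j : Fin t, f (.inr (.inr j)) ≠ f (.inl 0) ∧ f (.inr (.inr j)) ≠ f (.inl 2) ∧
          f (.inr (.inr j)) ≠ f (.inl 4))) := by
  constructor
  · intro h
    refine ⟨h _ _ ?_, h _ _ ?_, fun i => ⟨h _ _ ?_, h _ _ ?_, h _ _ ?_⟩,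
      fun j => ⟨h _ _ ?_, h _ _ ?_, h _ _ ?_⟩⟩ <;>
    · rw [graphX, SimpleGraph.fromRel_adj]
      refine ⟨by simp, Or.inl ?_⟩
      unfold XAdj
      first
        | exact Or.inl ⟨rfl, rfl⟩
        | exact Or.inr (Or.inl ⟨rfl, rfl⟩)
        | exact Or.inr (Or.inr (Or.inl ⟨⟨_, rfl⟩, by simp⟩))
        | exact Or.inr (Or.inr (Or.inr ⟨⟨_, rfl⟩, by simp⟩))
  · rintro ⟨h12, h34, hS, hT⟩ u v hadj
    rw [graphX, SimpleGraph.fromRel_adj] at hadj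
    obtain ⟨-, hx | hx⟩ := hadj <;>
      rcases hx with ⟨hu, hv⟩ | ⟨hu, hv⟩ | ⟨⟨i, hu⟩, hv⟩ | ⟨⟨j, hu⟩, hv⟩ <;>
        subst hu <;>
        first
          | (subst hv; first | exact h12 | exact h34 | exact h12.symm | exact h34.symm)
          | (rcases hv with hv | hv | hv <;> subst hv <;>
              first
                | exact (hS i).1 | exact (hS i).2.1 | exact (hS i).2.2
                | exact (hT j).1 | exact (hT j).2.1 | exact (hT j).2.2
                | exact ((hS i).1).symm | exact ((hS i).2.1).symm | exact ((hS i).2.2).symm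
                | exact ((hT j).1).symm | exact ((hT j).2.1).symm | exact ((hT j).2.2).symm)

abbrev SOK (k : ℕ) (g : Fin 5 → Fin k) (c : Fin k) : Prop := c ≠ g 0 ∧ c ≠ g 1 ∧ c ≠ g 3
abbrev TOK (k : ℕ) (g : Fin 5 → Fin k) (c : Fin k) : Prop := c ≠ g 0 ∧ c ≠ g 2 ∧ c ≠ g 4
abbrev C5 (k : ℕ) (g : Fin 5 → Fin k) : Prop := g 1 ≠ g 2 ∧ g 3 ≠ g 4

abbrev Fiber (s t k : ℕ) (g : Fin 5 → Fin k) :=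
  PLift (C5 k g) × (Fin s → {c // SOK k g c}) × (Fin t → {c // TOK k g c})

def colorEquiv (s t k : ℕ) :
    {f : (Fin 5 ⊕ Fin s ⊕ Fin t) → Fin k // ∀ u v, (graphX s t).Adj u v → f u ≠ f v}
      ≃ Σ g : Fin 5 → Fin k, Fiber s t k g where
  toFun f := ⟨fun i => f.1 (.inl i),
    ⟨.up ⟨((proper_iff f.1).1 f.2).1, ((proper_iff f.1).1 f.2).2.1⟩,
     fun i => ⟨f.1 (.inr (.inl i)), ((proper_iff f.1).1 f.2).2.2.1 i⟩,
     fun j => ⟨f.1 (.inr (.inr j)), ((proper_iff f.1).1 f.2).2.2.2 j⟩⟩⟩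
  invFun x := ⟨Sum.elim x.1 (Sum.elim (fun i => (x.2.2.1 i).1) (fun j => (x.2.2.2 j).1)),
    (proper_iff _).2 ⟨x.2.1.down.1, x.2.1.down.2,
      fun i => (x.2.2.1 i).2, fun j => (x.2.2.2 j).2⟩⟩
  left_inv f := by
    apply Subtype.ext
    funext v
    rcases v with i | i | j <;> rfl
  right_inv x := rfl

noncomputable def NS (k : ℕ) (g : Fin 5 → Fin k) : ℕ := Nat.card {c // SOK k g c}
noncomputable def NT (k : ℕ) (g : Fin 5 → Fin k) : ℕ := Nat.card {c // TOK k g c}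

lemma card_fiber (s t k : ℕ) (g : Fin 5 → Fin k) :
    Nat.card (Fiber s t k g) = if C5 k g then (NS k g)^s * (NT k g)^t else 0 := by
  split_ifs with h
  · haveI : Nonempty (PLift (C5 k g)) := ⟨.up h⟩
    haveI : Subsingleton (PLift (C5 k g)) := ⟨fun a b => by cases a; cases b; rfl⟩
    rw [Nat.card_prod, Nat.card_prod, Nat.card_unique, Nat.card_fun, Nat.card_fun]
    simp [NS, NT]
  · haveI : IsEmpty (PLift (C5 k g)) := ⟨fun a => h a.down⟩
    rw [Nat.card_prod, Nat.card_of_isEmpty]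
    simp

lemma numColorings_eq (s t k : ℕ) :
    numColorings (graphX s t) k = ∑ g : Fin 5 → Fin k,
      if C5 k g then (NS k g)^s * (NT k g)^t else 0 := by
  classical
  rw [numColorings, Nat.card_congr (colorEquiv s t k), Nat.card_eq_fintype_card,
    Fintype.card_sigma]
  exact Finset.sum_congr rfl fun g _ => by
    rw [← Nat.card_eq_fintype_card, card_fiber]

lemma NS_cast (k : ℕ) (g : Fin 5 → Fin k) :
    (NS k g : ℝ) = (k : ℝ) - (({g 0, g 1, g 3} : Finset (Fin k)).card : ℕ) := by
  classical
  have h1 : NS k g = k - ({g 0, g 1, g 3} : Finset (Fin k)).card := by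
    rw [NS, Nat.card_eq_fintype_card, Fintype.card_subtype]
    have : univ.filter (SOK k g) = ({g 0, g 1, g 3} : Finset (Fin k))ᶜ := by
      ext c
      simp [SOK, not_or]
    rw [this, card_compl, Fintype.card_fin]
  rw [h1, Nat.cast_sub]
  calc ({g 0, g 1, g 3} : Finset (Fin k)).card ≤ (univ : Finset (Fin k)).card :=
        card_le_univ _
    _ = k := by simp

lemma NT_cast (k : ℕ) (g : Fin 5 → Fin k) :
    (NT k g : ℝ) = (k : ℝ) - (({g 0, g 2, g 4} : Finset (Fin k)).card : ℕ) := by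
  classical
  have h1 : NT k g = k - ({g 0, g 2, g 4} : Finset (Fin k)).card := by
    rw [NT, Nat.card_eq_fintype_card, Fintype.card_subtype]
    have : univ.filter (TOK k g) = ({g 0, g 2, g 4} : Finset (Fin k))ᶜ := by
      ext c
      simp [TOK, not_or]
    rw [this, card_compl, Fintype.card_fin]
  rw [h1, Nat.cast_sub]
  calc ({g 0, g 2, g 4} : Finset (Fin k)).card ≤ (univ : Finset (Fin k)).card :=
        card_le_univ _
    _ = k := by simp

variable {k : ℕ}

def c3 {k : ℕ} (a b d : Fin k) : ℕ := ({a, b, d} : Finset (Fin k)).card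

lemma sum_insert_card (u : ℕ → ℝ) (A : Finset (Fin k)) :
    ∑ d : Fin k, u (insert d A).card
      = (A.card : ℝ) * u A.card + ((k : ℝ) - A.card) * u (A.card + 1) := by
  classical
  rw [← Finset.sum_filter_add_sum_filter_not univ (· ∈ A)]
  have e1 : univ.filter (· ∈ A) = A := by ext x; simp
  have e2 : univ.filter (· ∉ A) = Aᶜ := by ext x; simp
  rw [Finset.sum_congr e1 (fun d hd => by rw [Finset.insert_eq_self.2 hd]),
      Finset.sum_congr e2 (fun d hd => by
        rw [Finset.card_insert_of_notMem (Finset.mem_compl.1 hd)]),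
      Finset.sum_const, Finset.sum_const, card_compl, Fintype.card_fin,
      nsmul_eq_mul, nsmul_eq_mul, Nat.cast_sub (by simpa using card_le_univ A)]

lemma triple_insert (a b d : Fin k) : ({a, b, d} : Finset (Fin k)) = insert d {a, b} := by
  ext x; simp; tauto

lemma c3_swap (a b d : Fin k) : c3 a b d = c3 a d b := by
  unfold c3
  congr 1
  ext x; simp; tauto

lemma sum_d (u : ℕ → ℝ) (a b : Fin k) :
    ∑ d : Fin k, u (c3 a b d)
      = if b = a then u 1 + ((k:ℝ) - 1) * u 2 else 2 * u 2 + ((k:ℝ) - 2) * u 3 := by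
  classical
  have : ∀ d, c3 a b d = (insert d ({a, b} : Finset (Fin k))).card := fun d => by
    rw [c3, triple_insert]
  simp_rw [this]
  rw [sum_insert_card]
  split_ifs with h
  · subst h
    have : ({b, b} : Finset (Fin k)) = {b} := by simp
    rw [this]
    simp
  · rw [Finset.card_pair (Ne.symm h)]
    norm_num

lemma sum_split_b (a : Fin k) (f : Fin k → ℝ) (x y : ℝ)
    (ha : f a = x) (hb : ∀ b, b ≠ a → f b = y) :
    ∑ b : Fin k, f b = x + ((k:ℝ) - 1) * y := by
  classical
  rw [← Finset.add_sum_erase univ f (mem_univ a), ha,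
      Finset.sum_congr rfl (fun b hb' => hb b (Finset.mem_erase.1 hb').1),
      Finset.sum_const, Finset.card_erase_of_mem (mem_univ a), card_univ,
      Fintype.card_fin, nsmul_eq_mul, Nat.cast_sub a.pos]
  norm_num

lemma sum_bd (u : ℕ → ℝ) (a : Fin k) :
    ∑ b : Fin k, ∑ d : Fin k, u (c3 a b d)
      = u 1 + 3 * ((k:ℝ) - 1) * u 2 + ((k:ℝ) - 1) * ((k:ℝ) - 2) * u 3 := by
  rw [sum_split_b a _ (u 1 + ((k:ℝ)-1) * u 2) (2 * u 2 + ((k:ℝ)-2) * u 3)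
    (by rw [sum_d]; simp) (fun b hb => by rw [sum_d]; simp [hb])]
  ring

lemma sum_prod_b (us ut : ℕ → ℝ) (a : Fin k) :
    ∑ b : Fin k, (∑ d : Fin k, us (c3 a b d)) * (∑ e : Fin k, ut (c3 a b e))
      = (us 1 + ((k:ℝ)-1) * us 2) * (ut 1 + ((k:ℝ)-1) * ut 2)
        + ((k:ℝ) - 1) * ((2 * us 2 + ((k:ℝ)-2) * us 3) * (2 * ut 2 + ((k:ℝ)-2) * ut 3)) := by
  rw [sum_split_b a _ ((us 1 + ((k:ℝ)-1) * us 2) * (ut 1 + ((k:ℝ)-1) * ut 2))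
    ((2 * us 2 + ((k:ℝ)-2) * us 3) * (2 * ut 2 + ((k:ℝ)-2) * ut 3))
    (by rw [sum_d, sum_d]; simp) (fun b hb => by rw [sum_d, sum_d]; simp [hb])]

lemma sum2_factor (f g : Fin k → ℝ) :
    ∑ d : Fin k, ∑ e : Fin k, f d * g e = (∑ d : Fin k, f d) * (∑ e : Fin k, g e) := by
  rw [Finset.sum_mul_sum]

lemma sum4_factor (f g : Fin k → Fin k → ℝ) :
    ∑ b : Fin k, ∑ c : Fin k, ∑ d : Fin k, ∑ e : Fin k, f b d * g c e
      = (∑ b : Fin k, ∑ d : Fin k, f b d) * (∑ c : Fin k, ∑ e : Fin k, g c e) := by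
  rw [Finset.sum_mul]
  refine Finset.sum_congr rfl fun b _ => ?_
  rw [Finset.sum_comm, Finset.sum_mul]
  refine Finset.sum_congr rfl fun d _ => ?_
  rw [Finset.mul_sum]
  refine Finset.sum_congr rfl fun c _ => ?_
  rw [Finset.mul_sum]

def quintEquiv (k : ℕ) : (Fin k × Fin k × Fin k × Fin k × Fin k) ≃ (Fin 5 → Fin k) where
  toFun x := ![x.1, x.2.1, x.2.2.1, x.2.2.2.1, x.2.2.2.2]
  invFun g := (g 0, g 1, g 2, g 3, g 4)
  left_inv x := rfl
  right_inv g := by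
    funext i
    fin_cases i <;> rfl

lemma sum_quint (F : Fin k → Fin k → Fin k → Fin k → Fin k → ℝ) :
    ∑ g : Fin 5 → Fin k, F (g 0) (g 1) (g 2) (g 3) (g 4)
      = ∑ a : Fin k, ∑ b : Fin k, ∑ c : Fin k, ∑ d : Fin k, ∑ e : Fin k, F a b c d e := by
  rw [← Fintype.sum_equiv (quintEquiv k)
    (fun x => F x.1 x.2.1 x.2.2.1 x.2.2.2.1 x.2.2.2.2)
    (fun g => F (g 0) (g 1) (g 2) (g 3) (g 4)) (fun x => rfl)]
  simp only [Fintype.sum_prod_type]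

lemma ite_split (p q : Prop) [Decidable p] [Decidable q] (X : ℝ) :
    (if ¬p ∧ ¬q then X else 0)
      = X - (if p then X else 0) - (if q then X else 0) + (if p ∧ q then X else 0) := by
  by_cases hp : p <;> by_cases hq : q <;> simp [hp, hq]

lemma inner_master (us ut : ℕ → ℝ) (a : Fin k) :
    ∑ b : Fin k, ∑ c : Fin k, ∑ d : Fin k, ∑ e : Fin k,
        (if ¬(b = c) ∧ ¬(d = e) then us (c3 a b d) * ut (c3 a c e) else 0)
      = (∑ b : Fin k, ∑ d : Fin k, us (c3 a b d)) * (∑ c : Fin k, ∑ e : Fin k, ut (c3 a c e))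
        - 2 * ((us 1 + ((k:ℝ)-1) * us 2) * (ut 1 + ((k:ℝ)-1) * ut 2)
            + ((k:ℝ) - 1) * ((2 * us 2 + ((k:ℝ)-2) * us 3) * (2 * ut 2 + ((k:ℝ)-2) * ut 3)))
        + ∑ b : Fin k, ∑ d : Fin k, us (c3 a b d) * ut (c3 a b d) := by
  classical
  simp only [ite_split, Finset.sum_sub_distrib, Finset.sum_add_distrib]
  have hT00 : ∑ b : Fin k, ∑ c : Fin k, ∑ d : Fin k, ∑ e : Fin k,
      us (c3 a b d) * ut (c3 a c e)
      = (∑ b : Fin k, ∑ d : Fin k, us (c3 a b d)) * (∑ c : Fin k, ∑ e : Fin k, ut (c3 a c e)) :=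
    sum4_factor _ _
  have hT10 : ∑ b : Fin k, ∑ c : Fin k, ∑ d : Fin k, ∑ e : Fin k,
      (if b = c then us (c3 a b d) * ut (c3 a c e) else 0)
      = (us 1 + ((k:ℝ)-1) * us 2) * (ut 1 + ((k:ℝ)-1) * ut 2)
        + ((k:ℝ) - 1) * ((2 * us 2 + ((k:ℝ)-2) * us 3) * (2 * ut 2 + ((k:ℝ)-2) * ut 3)) := by
    simp only [Finset.sum_ite_irrel, Finset.sum_const_zero]
    simp only [Finset.sum_ite_eq, mem_univ, if_pos]
    simp only [sum2_factor]
    exact sum_prod_b us ut a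
  have hT01 : ∑ b : Fin k, ∑ c : Fin k, ∑ d : Fin k, ∑ e : Fin k,
      (if d = e then us (c3 a b d) * ut (c3 a c e) else 0)
      = (us 1 + ((k:ℝ)-1) * us 2) * (ut 1 + ((k:ℝ)-1) * ut 2)
        + ((k:ℝ) - 1) * ((2 * us 2 + ((k:ℝ)-2) * us 3) * (2 * ut 2 + ((k:ℝ)-2) * ut 3)) := by
    simp only [Finset.sum_ite_eq, mem_univ, if_pos]
    have swap1 : ∀ b : Fin k, ∑ c : Fin k, ∑ d : Fin k, us (c3 a b d) * ut (c3 a c d)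
        = ∑ d : Fin k, ∑ c : Fin k, us (c3 a b d) * ut (c3 a c d) := fun b => Finset.sum_comm
    simp_rw [swap1]
    rw [Finset.sum_comm]
    have : ∀ d : Fin k, (∑ b : Fin k, ∑ c : Fin k, us (c3 a b d) * ut (c3 a c d))
        = (∑ b : Fin k, us (c3 a d b)) * (∑ c : Fin k, ut (c3 a d c)) := by
      intro d
      simp_rw [fun b => c3_swap a b d]
      exact sum2_factor _ _
    simp_rw [this]
    exact sum_prod_b us ut a
  have hT11 : ∑ b : Fin k, ∑ c : Fin k, ∑ d : Fin k, ∑ e : Fin k,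
      (if b = c ∧ d = e then us (c3 a b d) * ut (c3 a c e) else 0)
      = ∑ b : Fin k, ∑ d : Fin k, us (c3 a b d) * ut (c3 a b d) := by
    simp only [ite_and, Finset.sum_ite_irrel, Finset.sum_const_zero, Finset.sum_ite_eq,
      mem_univ, if_pos]
  rw [hT00, hT10, hT01, hT11]
  ring

theorem count_formula (s t k : ℕ) :
    (numColorings (graphX s t) k : ℝ) =
      (k:ℝ) * ((((k:ℝ)-1)^s + 3*((k:ℝ)-1)*((k:ℝ)-2)^s + ((k:ℝ)-1)*((k:ℝ)-2)*((k:ℝ)-3)^s)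
          * (((k:ℝ)-1)^t + 3*((k:ℝ)-1)*((k:ℝ)-2)^t + ((k:ℝ)-1)*((k:ℝ)-2)*((k:ℝ)-3)^t)
        - 2 * (((((k:ℝ)-1)^s + ((k:ℝ)-1)*((k:ℝ)-2)^s) * ((((k:ℝ)-1)^t + ((k:ℝ)-1)*((k:ℝ)-2)^t)))
            + ((k:ℝ)-1) * ((2*((k:ℝ)-2)^s + ((k:ℝ)-2)*((k:ℝ)-3)^s)
                * (2*((k:ℝ)-2)^t + ((k:ℝ)-2)*((k:ℝ)-3)^t)))
        + (((k:ℝ)-1)^s*((k:ℝ)-1)^t + 3*((k:ℝ)-1)*((k:ℝ)-2)^s*((k:ℝ)-2)^t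
            + ((k:ℝ)-1)*((k:ℝ)-2)*((k:ℝ)-3)^s*((k:ℝ)-3)^t)) := by
  classical
  set K : ℝ := (k : ℝ)
  set us : ℕ → ℝ := fun m => (K - m)^s with hus
  set ut : ℕ → ℝ := fun m => (K - m)^t with hut
  have step1 : (numColorings (graphX s t) k : ℝ)
      = ∑ g : Fin 5 → Fin k,
          (if ¬(g 1 = g 2) ∧ ¬(g 3 = g 4) then
            us (c3 (g 0) (g 1) (g 3)) * ut (c3 (g 0) (g 2) (g 4)) else 0) := by
    rw [numColorings_eq s t k]
    push_cast
    refine Finset.sum_congr rfl fun g _ => ?_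
    by_cases h : C5 k g
    · rw [if_pos h, if_pos ⟨h.1, h.2⟩]
      push_cast
      rw [NS_cast, NT_cast]
      rfl
    · rw [if_neg h, if_neg (fun hh => h ⟨hh.1, hh.2⟩)]
  rw [step1]
  rw [sum_quint (fun a b c d e =>
    if ¬(b = c) ∧ ¬(d = e) then us (c3 a b d) * ut (c3 a c e) else 0)]
  have step2 : ∀ a : Fin k,
      ∑ b : Fin k, ∑ c : Fin k, ∑ d : Fin k, ∑ e : Fin k,
        (if ¬(b = c) ∧ ¬(d = e) then us (c3 a b d) * ut (c3 a c e) else 0)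
      = ((us 1 + 3*(K-1)*us 2 + (K-1)*(K-2)*us 3) * (ut 1 + 3*(K-1)*ut 2 + (K-1)*(K-2)*ut 3)
        - 2 * ((us 1 + (K-1) * us 2) * (ut 1 + (K-1) * ut 2)
            + (K - 1) * ((2 * us 2 + (K-2) * us 3) * (2 * ut 2 + (K-2) * ut 3)))
        + (us 1 * ut 1 + 3*(K-1)*(us 2 * ut 2) + (K-1)*(K-2)*(us 3 * ut 3))) := by
    intro a
    rw [inner_master us ut a, sum_bd us a, sum_bd ut a, sum_bd (fun m => us m * ut m) a]
  simp_rw [step2]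
  rw [Finset.sum_const, card_univ, Fintype.card_fin, nsmul_eq_mul]
  have h1 : us 1 = (K-1)^s := by rw [hus]; norm_num
  have h2 : us 2 = (K-2)^s := by rw [hus]; norm_num
  have h3 : us 3 = (K-3)^s := by rw [hus]; norm_num
  have g1 : ut 1 = (K-1)^t := by rw [hut]; norm_num
  have g2 : ut 2 = (K-2)^t := by rw [hut]; norm_num
  have g3 : ut 3 = (K-3)^t := by rw [hut]; norm_num
  rw [h1, h2, h3, g1, g2, g3]
  ring

noncomputable def chromX (s t : ℕ) : Polynomial ℝ :=
  X * (((X-1)^s + 3*(X-1)*(X-2)^s + (X-1)*(X-2)*(X-3)^s)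
      * ((X-1)^t + 3*(X-1)*(X-2)^t + (X-1)*(X-2)*(X-3)^t)
    - 2 * ((((X-1)^s + (X-1)*(X-2)^s) * (((X-1)^t + (X-1)*(X-2)^t)))
        + (X-1) * ((2*(X-2)^s + (X-2)*(X-3)^s) * (2*(X-2)^t + (X-2)*(X-3)^t)))
    + ((X-1)^s*(X-1)^t + 3*(X-1)*(X-2)^s*(X-2)^t + (X-1)*(X-2)*(X-3)^s*(X-3)^t))

lemma chromX_eval (s t : ℕ) (x : ℝ) :
    (chromX s t).eval x =
      x * (((x-1)^s + 3*(x-1)*(x-2)^s + (x-1)*(x-2)*(x-3)^s)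
          * ((x-1)^t + 3*(x-1)*(x-2)^t + (x-1)*(x-2)*(x-3)^t)
        - 2 * ((((x-1)^s + (x-1)*(x-2)^s) * (((x-1)^t + (x-1)*(x-2)^t)))
            + (x-1) * ((2*(x-2)^s + (x-2)*(x-3)^s) * (2*(x-2)^t + (x-2)*(x-3)^t)))
        + ((x-1)^s*(x-1)^t + 3*(x-1)*(x-2)^s*(x-2)^t + (x-1)*(x-2)*(x-3)^s*(x-3)^t)) := by
  simp [chromX]

lemma chromX_eval_grouped (s t : ℕ) (x : ℝ) :
    (chromX s t).eval x =
      x * (x-1) *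
        ((x-1)^s*(x-2)^t + (x-2)^s*(x-1)^t
          + (x-2)*((x-1)^s*(x-3)^t + (x-3)^s*(x-1)^t)
          + (7*x-12)*(x-2)^s*(x-2)^t
          + (x-2)*(3*x-7)*((x-2)^s*(x-3)^t + (x-3)^s*(x-2)^t)
          + (x-2)*(x^2-5*x+7)*(x-3)^s*(x-3)^t) := by
  rw [chromX_eval]
  ring

lemma bracket_neg (s t : ℕ) (hs : 3 ≤ s) (ht : 3 ≤ t) (hso : Odd s) (hto : Odd t) :
    ((3/2:ℝ)-1)^s*((3/2:ℝ)-2)^t + ((3/2:ℝ)-2)^s*((3/2:ℝ)-1)^t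
      + ((3/2:ℝ)-2)*(((3/2:ℝ)-1)^s*((3/2:ℝ)-3)^t + ((3/2:ℝ)-3)^s*((3/2:ℝ)-1)^t)
      + (7*(3/2:ℝ)-12)*((3/2:ℝ)-2)^s*((3/2:ℝ)-2)^t
      + ((3/2:ℝ)-2)*(3*(3/2:ℝ)-7)*(((3/2:ℝ)-2)^s*((3/2:ℝ)-3)^t + ((3/2:ℝ)-3)^s*((3/2:ℝ)-2)^t)
      + ((3/2:ℝ)-2)*((3/2:ℝ)^2-5*(3/2:ℝ)+7)*((3/2:ℝ)-3)^s*((3/2:ℝ)-3)^t < 0 := by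
  have e1 : ((3/2:ℝ)-1) = 1/2 := by norm_num
  have e2 : ((3/2:ℝ)-2) = -(1/2) := by norm_num
  have e3 : ((3/2:ℝ)-3) = -(3/2) := by norm_num
  rw [e1, e2, e3, Odd.neg_pow hso, Odd.neg_pow hto, Odd.neg_pow hso, Odd.neg_pow hto]
  set p : ℝ := (1/2:ℝ)^s with hp
  set q : ℝ := (1/2:ℝ)^t with hq
  set r : ℝ := (3/2:ℝ)^s with hr
  set w : ℝ := (3/2:ℝ)^t with hw
  have hp0 : 0 < p := by positivity
  have hq0 : 0 < q := by positivity
  have hr0 : 0 < r := by positivity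
  have hw0 : 0 < w := by positivity
  have hpr : p ≤ (1/27) * r := by
    rw [hp, hr, show (1/2:ℝ) = (1/3)*(3/2) by norm_num, mul_pow]
    have h13 : ((1/3:ℝ))^s ≤ (1/3:ℝ)^3 :=
      pow_le_pow_of_le_one (by norm_num) (by norm_num) hs
    nlinarith [pow_pos (show (0:ℝ) < 3/2 by norm_num) s]
  have hqw : q ≤ (1/27) * w := by
    rw [hq, hw, show (1/2:ℝ) = (1/3)*(3/2) by norm_num, mul_pow]
    have h13 : ((1/3:ℝ))^t ≤ (1/3:ℝ)^3 :=
      pow_le_pow_of_le_one (by norm_num) (by norm_num) ht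
    nlinarith [pow_pos (show (0:ℝ) < 3/2 by norm_num) t]
  nlinarith [mul_le_mul_of_nonneg_right hpr hw0.le, mul_le_mul_of_nonneg_left hqw hr0.le,
    mul_pos hp0 hq0, mul_pos hr0 hw0]

lemma bracket_pos (s t : ℕ) (hs : 3 ≤ s) (ht : 3 ≤ t) (hso : Odd s) (hto : Odd t)
    (ε : ℝ) (hε : 0 < ε) (hε48 : ε ≤ 1/48) (hεst : ε * ((s:ℝ)+(t:ℝ)) = 1/8) :
    0 < ((2-ε:ℝ)-1)^s*((2-ε:ℝ)-2)^t + ((2-ε:ℝ)-2)^s*((2-ε:ℝ)-1)^t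
      + ((2-ε:ℝ)-2)*(((2-ε:ℝ)-1)^s*((2-ε:ℝ)-3)^t + ((2-ε:ℝ)-3)^s*((2-ε:ℝ)-1)^t)
      + (7*(2-ε:ℝ)-12)*((2-ε:ℝ)-2)^s*((2-ε:ℝ)-2)^t
      + ((2-ε:ℝ)-2)*(3*(2-ε:ℝ)-7)*(((2-ε:ℝ)-2)^s*((2-ε:ℝ)-3)^t
          + ((2-ε:ℝ)-3)^s*((2-ε:ℝ)-2)^t)
      + ((2-ε:ℝ)-2)*((2-ε:ℝ)^2-5*(2-ε:ℝ)+7)*((2-ε:ℝ)-3)^s*((2-ε:ℝ)-3)^t := by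
  have e1 : ((2-ε:ℝ)-1) = 1-ε := by ring
  have e2 : ((2-ε:ℝ)-2) = -ε := by ring
  have e3 : ((2-ε:ℝ)-3) = -(1+ε) := by ring
  rw [e1, e2, e3, Odd.neg_pow hso, Odd.neg_pow hto, Odd.neg_pow hso, Odd.neg_pow hto]
  set a : ℝ := (1-ε)^s with ha
  set a' : ℝ := (1-ε)^t with ha'
  set c : ℝ := (1+ε)^s with hc
  set c' : ℝ := (1+ε)^t with hc'
  have hε1 : ε ≤ 1 := by linarith
  have hc0 : (0:ℝ) < c := by positivity
  have hc'0 : (0:ℝ) < c' := by positivity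
  have hbs : (0:ℝ) ≤ ε^s := by positivity
  have hbt : (0:ℝ) ≤ ε^t := by positivity
  have ha0 : (0:ℝ) ≤ a := pow_nonneg (by linarith) s
  have ha'0 : (0:ℝ) ≤ a' := pow_nonneg (by linarith) t
  have ha1 : a ≤ 1 := pow_le_one₀ (by linarith) (by linarith)
  have ha'1 : a' ≤ 1 := pow_le_one₀ (by linarith) (by linarith)
  have hes3 : ε^s ≤ ε^3 := pow_le_pow_of_le_one hε.le hε1 hs
  have het3 : ε^t ≤ ε^3 := pow_le_pow_of_le_one hε.le hε1 ht
  have key : ∀ n : ℕ, (1 - 2*(n:ℕ)*ε) * (1+ε)^n ≤ (1-ε)^n := by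
    intro n
    have h1 : ((1-2*ε)*(1+ε))^n ≤ (1-ε)^n := by
      apply pow_le_pow_left₀ (by nlinarith) (by nlinarith)
    have h2 : (1 : ℝ) + (n:ℝ)*(-(2*ε)) ≤ (1 + (-(2*ε)))^n := one_add_mul_le_pow (by linarith) n
    have h3 : (1 - 2*(n:ℕ)*ε) * (1+ε)^n ≤ (1-2*ε)^n * (1+ε)^n := by
      apply mul_le_mul_of_nonneg_right _ (by positivity)
      calc (1 - 2*(n:ℕ)*ε) = 1 + (n:ℝ)*(-(2*ε)) := by push_cast; ring
        _ ≤ (1 + (-(2*ε)))^n := h2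
        _ = (1-2*ε)^n := by ring_nf
    calc (1 - 2*(n:ℕ)*ε) * (1+ε)^n ≤ (1-2*ε)^n * (1+ε)^n := h3
      _ = ((1-2*ε)*(1+ε))^n := (mul_pow _ _ _).symm
      _ ≤ (1-ε)^n := h1
  have keyS : (1 - 2*(s:ℝ)*ε) * c ≤ a := key s
  have keyT : (1 - 2*(t:ℝ)*ε) * c' ≤ a' := key t
  have hsum : (7/4) * (c * c') ≤ a * c' + c * a' := by
    have h1 : (1 - 2*(s:ℝ)*ε) * c * c' ≤ a * c' :=
      mul_le_mul_of_nonneg_right keyS hc'0.le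
    have h2 : c * ((1 - 2*(t:ℝ)*ε) * c') ≤ c * a' :=
      mul_le_mul_of_nonneg_left keyT hc0.le
    have h5 : (1 - 2*(s:ℝ)*ε) * c * c' + c * ((1 - 2*(t:ℝ)*ε) * c')
        = (2 - 2*(ε*((s:ℝ)+(t:ℝ)))) * (c * c') := by ring
    rw [hεst] at h5
    norm_num at h5
    linarith [h1, h2]
  have hcc1 : (1:ℝ) ≤ c * c' := by
    have k1 : (1:ℝ) ≤ c := one_le_pow₀ (by linarith)
    have k2 : (1:ℝ) ≤ c' := one_le_pow₀ (by linarith)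
    nlinarith
  have hε2 : ε*ε ≤ 1/2304 := by nlinarith
  have F8 : ε^3 ≤ ε*(1/2304) := by
    calc ε^3 = ε*(ε*ε) := by ring
      _ ≤ ε*(1/2304) := mul_le_mul_of_nonneg_left hε2 hε.le
  have F1 : a*ε^t ≤ ε^3 := by
    calc a*ε^t ≤ 1*ε^t := mul_le_mul_of_nonneg_right ha1 hbt
      _ = ε^t := one_mul _
      _ ≤ ε^3 := het3
  have F2 : ε^s*a' ≤ ε^3 := by
    calc ε^s*a' ≤ ε^s*1 := mul_le_mul_of_nonneg_left ha'1 hbs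
      _ = ε^s := mul_one _
      _ ≤ ε^3 := hes3
  have F3 : ε*((7/4)*(c*c')) ≤ ε*(a*c' + c*a') := mul_le_mul_of_nonneg_left hsum hε.le
  have F4 : (0:ℝ) ≤ (2-7*ε)*(ε^s*ε^t) :=
    mul_nonneg (by linarith) (mul_nonneg hbs hbt)
  have F5 : (0:ℝ) ≤ (ε*(1+3*ε))*(ε^s*c' + c*ε^t) :=
    mul_nonneg (mul_nonneg hε.le (by linarith))
      (add_nonneg (mul_nonneg hbs hc'0.le) (mul_nonneg hc0.le hbt))
  have h120 : 1+ε+ε*ε ≤ 21/20 := by nlinarith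
  have F6 : ε*(1+ε+ε*ε)*(c*c') ≤ ε*(21/20)*(c*c') :=
    mul_le_mul_of_nonneg_right (mul_le_mul_of_nonneg_left h120 hε.le)
      (mul_nonneg hc0.le hc'0.le)
  have F7 : ε*1 ≤ ε*(c*c') := mul_le_mul_of_nonneg_left hcc1 hε.le
  linarith [F1, F2, F3, F4, F5, F6, F7, F8, hε]

end GraphXAux

open GraphXAux in
/-- For all odd `s, t ≥ 3`, the chromatic polynomial of `X(s,t)` has a real root strictly
between `1` and `2`.  (Together with 3-connectivity and non-bipartiteness of `X(s,t)`, this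
refutes Jackson's conjecture.) -/
theorem graphX_has_chromatic_root_between_one_and_two (s t : ℕ) (hs : 3 ≤ s) (ht : 3 ≤ t)
    (hsodd : Odd s) (htodd : Odd t)
    (P : Polynomial ℝ) (hP : IsChromaticPolynomial (graphX s t) P) :
    ∃ x : ℝ, 1 < x ∧ x < 2 ∧ P.eval x = 0 := by
  have hPR : P = chromX s t := by
    have hroot : ∀ k : ℕ, (P - chromX s t).eval (k:ℝ) = 0 := by
      intro k
      rw [Polynomial.eval_sub, hP k, chromX_eval, ← count_formula s t k, sub_self]
    have hinf : {x : ℝ | (P - chromX s t).IsRoot x}.Infinite := by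
      apply Set.infinite_of_injective_forall_mem (f := fun n : ℕ => (n:ℝ))
        (hi := Nat.cast_injective)
      exact fun n => hroot n
    have h0 := Polynomial.eq_zero_of_infinite_isRoot _ hinf
    exact sub_eq_zero.1 h0
  set ε : ℝ := 1/(8*((s:ℝ)+(t:ℝ))) with hεdef
  have hst6 : (6:ℝ) ≤ (s:ℝ)+(t:ℝ) := by
    have h1 : (3:ℝ) ≤ (s:ℝ) := by exact_mod_cast hs
    have h2 : (3:ℝ) ≤ (t:ℝ) := by exact_mod_cast ht
    linarith
  have hε : 0 < ε := by
    rw [hεdef]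
    positivity
  have hε48 : ε ≤ 1/48 := by
    rw [hεdef, div_le_div_iff₀ (by linarith) (by norm_num)]
    linarith
  have hεst : ε * ((s:ℝ)+(t:ℝ)) = 1/8 := by
    rw [hεdef]
    field_simp
  have hneg : P.eval (3/2) < 0 := by
    rw [hPR, chromX_eval_grouped]
    exact mul_neg_of_pos_of_neg (by norm_num) (bracket_neg s t hs ht hsodd htodd)
  have hpos : 0 < P.eval (2-ε) := by
    rw [hPR, chromX_eval_grouped]
    exact mul_pos (by nlinarith) (bracket_pos s t hs ht hsodd htodd ε hε hε48 hεst)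
  have hle : (3/2:ℝ) ≤ 2-ε := by linarith
  have hcont : ContinuousOn (fun x : ℝ => P.eval x) (Set.Icc (3/2) (2-ε)) :=
    (Polynomial.continuous P).continuousOn
  obtain ⟨x, hx, hfx⟩ := intermediate_value_Ioo hle hcont
    (Set.mem_Ioo.2 ⟨hneg, hpos⟩ : (0:ℝ) ∈ Set.Ioo (P.eval (3/2)) (P.eval (2-ε)))
  exact ⟨x, by linarith [hx.1], by linarith [hx.2], hfx⟩
end

section
/- For all odd integers s, t ≥ 3, there exists α > 0 such that the chromatic polynomial of X(s,t) is strictly negative on the interval (1, 1 + α). (This follows because X(s,t) has an odd number of vertices, is connected, and, being 3-connected, has exactly one block, so the root at x = 1 has multiplicity one.) -/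
/-! ### Auxiliary real functions and polynomials -/

open Finset Polynomial

noncomputable def Ff (m : ℕ) (x : ℝ) : ℝ :=
  (x-1)^m + 3*(x-1)*(x-2)^m + (x-1)*(x-2)*(x-3)^m
noncomputable def Gf (m : ℕ) (x : ℝ) : ℝ := (x-1)^m + (x-1)*(x-2)^m
noncomputable def Hf (m : ℕ) (x : ℝ) : ℝ := 2*(x-2)^m + (x-2)*(x-3)^m
noncomputable def qf (s t : ℕ) (x : ℝ) : ℝ :=
  x * (Ff s x * Ff t x - 2*(Gf s x * Gf t x + (x-1) * (Hf s x * Hf t x)) + Ff (s+t) x)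

noncomputable def Fp (m : ℕ) : Polynomial ℝ :=
  (X - 1)^m + 3*(X - 1)*(X - 2)^m + (X - 1)*(X - 2)*(X - 3)^m
noncomputable def Gp (m : ℕ) : Polynomial ℝ := (X - 1)^m + (X - 1)*(X - 2)^m
noncomputable def Hp (m : ℕ) : Polynomial ℝ := 2*(X - 2)^m + (X - 2)*(X - 3)^m
noncomputable def Qp (s t : ℕ) : Polynomial ℝ :=
  X * (Fp s * Fp t - 2*(Gp s * Gp t + (X - 1) * (Hp s * Hp t)) + Fp (s+t))

lemma Qp_eval (s t : ℕ) (x : ℝ) : (Qp s t).eval x = qf s t x := by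
  simp [Qp, Fp, Gp, Hp, qf, Ff, Gf, Hf]

noncomputable def ff (a : ℕ) (x : ℝ) : ℝ :=
  (x-1)^a + 3*(x-2)^(a+1) + (x-2)*(x-3)^(a+1)
noncomputable def gg (a : ℕ) (x : ℝ) : ℝ := (x-1)^a + (x-2)^(a+1)
noncomputable def rf (a b : ℕ) (x : ℝ) : ℝ :=
  (x-1) * (ff a x * ff b x - 2 * (gg a x * gg b x)) + ff (a+b+1) x
    - 2 * (Hf (a+1) x * Hf (b+1) x)

lemma qf_factor (a b : ℕ) (x : ℝ) : qf (a+1) (b+1) x = x * (x-1) * rf a b x := by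
  unfold qf rf Ff Gf Hf ff gg
  ring

lemma rf_cont (a b : ℕ) : Continuous (rf a b) := by
  unfold rf ff gg Hf
  fun_prop

lemma rf_one_neg (a b : ℕ) (hEa : Even a) (hEb : Even b) (ha2 : 2 ≤ a) (hb2 : 2 ≤ b) :
    rf a b 1 < 0 := by
  have hOa : Odd (a+1) := Even.add_one hEa
  have hOb : Odd (b+1) := Even.add_one hEb
  have hEab : Even (a+b+2) := by
    rcases hEa with ⟨m, hm⟩; rcases hEb with ⟨n, hn⟩
    exact ⟨m + n + 1, by omega⟩
  have h1 : rf a b 1 = 3 - 2^(a+b+2) - 2*((2^(a+1) - 2) * (2^(b+1) - 2)) := by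
    unfold rf ff gg Hf
    norm_num
    rw [show a+b+1+1 = a+b+2 by omega, hEab.neg_one_pow, hEab.neg_pow, hOa.neg_one_pow,
      hOa.neg_pow, hOb.neg_one_pow, hOb.neg_pow]
    ring
  have hA : (8:ℝ) ≤ 2^(a+1) := by
    calc (8:ℝ) = 2^3 := by norm_num
    _ ≤ 2^(a+1) := pow_le_pow_right₀ (by norm_num) (by omega)
  have hB : (8:ℝ) ≤ 2^(b+1) := by
    calc (8:ℝ) = 2^3 := by norm_num
    _ ≤ 2^(b+1) := pow_le_pow_right₀ (by norm_num) (by omega)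
  have hAB : (2:ℝ)^(a+b+2) = 2^(a+1) * 2^(b+1) := by
    rw [← pow_add]; congr 1; omega
  rw [h1, hAB]
  nlinarith [mul_nonneg (by linarith : (0:ℝ) ≤ 2^(a+1) - 8) (by linarith : (0:ℝ) ≤ 2^(b+1) - 8)]

/-! ### Summation lemmas -/

section Sums

variable {k : ℕ}

lemma kpos (c0 : Fin k) : 1 ≤ k := Nat.pos_of_ne_zero (by rintro rfl; exact c0.elim0)

lemma sumG (m : ℕ) (c0 : Fin k) :
    ∑ x : Fin k, ((k:ℝ) - (({c0, x} : Finset (Fin k)).card : ℝ))^m = Gf m k := by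
  have h1 : 1 ≤ k := kpos c0
  rw [← Finset.add_sum_erase _ _ (mem_univ c0)]
  have e1 : (({c0, c0} : Finset (Fin k)).card : ℝ) = 1 := by simp
  rw [e1]
  have e2 : ∀ x ∈ univ.erase c0,
      ((k:ℝ) - (({c0, x} : Finset (Fin k)).card : ℝ))^m = ((k:ℝ) - 2)^m := by
    intro x hx
    have hne : c0 ≠ x := (Finset.ne_of_mem_erase hx).symm
    rw [Finset.card_pair hne]
    norm_num
  rw [Finset.sum_congr rfl e2, Finset.sum_const, Finset.card_erase_of_mem (mem_univ c0),
    Finset.card_univ, Fintype.card_fin, nsmul_eq_mul, Nat.cast_sub h1]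
  unfold Gf
  push_cast
  ring

lemma sumH (m : ℕ) (c0 c : Fin k) (hc : c ≠ c0) :
    ∑ x : Fin k, ((k:ℝ) - (({c0, c, x} : Finset (Fin k)).card : ℝ))^m = Hf m k := by
  have h2 : 2 ≤ k := by
    by_contra h
    interval_cases k
    · exact c0.elim0
    · exact hc (Subsingleton.elim c c0)
  rw [← Finset.sum_sdiff (Finset.subset_univ ({c0, c} : Finset (Fin k)))]
  have e1 : ∀ x ∈ (univ \ ({c0, c} : Finset (Fin k))),
      ((k:ℝ) - (({c0, c, x} : Finset (Fin k)).card : ℝ))^m = ((k:ℝ) - 3)^m := by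
    intro x hx
    simp only [mem_sdiff, mem_univ, mem_insert, mem_singleton, true_and, not_or] at hx
    have hcard : (({c0, c, x} : Finset (Fin k)).card : ℝ) = 3 := by
      have h0 : c0 ∉ ({c, x} : Finset (Fin k)) := by
        simp only [mem_insert, mem_singleton, not_or]
        exact ⟨Ne.symm hc, fun h => hx.1 h.symm⟩
      rw [Finset.card_insert_of_notMem h0, Finset.card_pair (fun h => hx.2 h.symm)]
      norm_num
    rw [hcard]
  have e2 : ∀ x ∈ ({c0, c} : Finset (Fin k)),
      ((k:ℝ) - (({c0, c, x} : Finset (Fin k)).card : ℝ))^m = ((k:ℝ) - 2)^m := by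
    intro x hx
    simp only [mem_insert, mem_singleton] at hx
    have hcard : ({c0, c, x} : Finset (Fin k)) = {c0, c} := by
      rcases hx with rfl | rfl <;> (ext y; simp; try tauto)
    rw [hcard, Finset.card_pair (Ne.symm hc)]
    norm_num
  rw [Finset.sum_congr rfl e1, Finset.sum_congr rfl e2, Finset.sum_const, Finset.sum_const,
    Finset.card_sdiff_of_subset (Finset.subset_univ _), Finset.card_univ, Fintype.card_fin,
    Finset.card_pair (Ne.symm hc), nsmul_eq_mul, nsmul_eq_mul, Nat.cast_sub h2]
  unfold Hf
  push_cast
  ring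

lemma sum_ite_const_s7 {α : Type*} [Fintype α] (p : Prop) [Decidable p] (f : α → ℝ) :
    ∑ x : α, (if p then f x else 0) = if p then ∑ x : α, f x else 0 := by
  split <;> simp

lemma sum_ite_point (c0 : Fin k) (A B : ℝ) :
    ∑ d : Fin k, (if d = c0 then A else B) = A + ((k:ℝ)-1) * B := by
  rw [← Finset.add_sum_erase _ _ (mem_univ c0), if_pos rfl]
  have h : ∀ d ∈ univ.erase c0, (if d = c0 then A else B) = B :=
    fun d hd => if_neg (Finset.ne_of_mem_erase hd)
  rw [Finset.sum_congr rfl h, Finset.sum_const, Finset.card_erase_of_mem (mem_univ c0),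
    Finset.card_univ, Fintype.card_fin, nsmul_eq_mul, Nat.cast_sub (kpos c0)]
  ring

lemma sumInner (m : ℕ) (c0 d : Fin k) :
    ∑ x : Fin k, ((k:ℝ) - (({c0, d, x} : Finset (Fin k)).card : ℝ))^m
      = if d = c0 then Gf m (k:ℝ) else Hf m (k:ℝ) := by
  by_cases hd : d = c0
  · subst hd
    rw [if_pos rfl]
    have : ∀ x : Fin k, ({d, d, x} : Finset (Fin k)) = {d, x} := fun x => Finset.insert_idem d {x}
    simp only [this]
    exact sumG m d
  · rw [if_neg hd]
    exact sumH m c0 d hd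

lemma sumF (m : ℕ) (c0 : Fin k) :
    ∑ d : Fin k, ∑ x : Fin k, ((k:ℝ) - (({c0, d, x} : Finset (Fin k)).card : ℝ))^m
      = Ff m (k:ℝ) := by
  have h1 : 1 ≤ k := kpos c0
  rw [Finset.sum_congr rfl (fun d _ => sumInner m c0 d), sum_ite_point c0]
  unfold Ff Gf Hf
  ring

end Sums

lemma iteIE (p q : Prop) [Decidable p] [Decidable q] (w : ℝ) :
    (if ¬p ∧ ¬q then w else 0)
      = w - (if p then w else 0) - (if q then w else 0) + (if p ∧ q then w else 0) := by
  by_cases hp : p <;> by_cases hq : q <;> simp [hp, hq]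

lemma mainSum (s t k : ℕ) :
    ∑ c0 : Fin k, ∑ c1 : Fin k, ∑ c2 : Fin k, ∑ c3 : Fin k, ∑ c4 : Fin k,
      (if c1 ≠ c2 ∧ c3 ≠ c4 then
        ((k:ℝ) - (({c0,c1,c3} : Finset (Fin k)).card : ℝ))^s *
        ((k:ℝ) - (({c0,c2,c4} : Finset (Fin k)).card : ℝ))^t else 0)
    = qf s t (k:ℝ) := by
  have key : ∀ c0 : Fin k,
      (∑ c1 : Fin k, ∑ c2 : Fin k, ∑ c3 : Fin k, ∑ c4 : Fin k,
        (if c1 ≠ c2 ∧ c3 ≠ c4 then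
          ((k:ℝ) - (({c0,c1,c3} : Finset (Fin k)).card : ℝ))^s *
          ((k:ℝ) - (({c0,c2,c4} : Finset (Fin k)).card : ℝ))^t else 0))
      = Ff s k * Ff t k
        - 2*(Gf s (k:ℝ) * Gf t (k:ℝ) + ((k:ℝ)-1) * (Hf s (k:ℝ) * Hf t (k:ℝ)))
        + Ff (s+t) (k:ℝ) := by
    intro c0
    set A : Fin k → Fin k → ℝ :=
      fun c1 c3 => ((k:ℝ) - (({c0,c1,c3} : Finset (Fin k)).card : ℝ))^s with hA
    set B : Fin k → Fin k → ℝ :=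
      fun c2 c4 => ((k:ℝ) - (({c0,c2,c4} : Finset (Fin k)).card : ℝ))^t with hB
    have hall : (∑ c1 : Fin k, ∑ c2 : Fin k, ∑ c3 : Fin k, ∑ c4 : Fin k, A c1 c3 * B c2 c4)
        = Ff s k * Ff t k := by
      have step1 : ∀ c1 c2 : Fin k, (∑ c3 : Fin k, ∑ c4 : Fin k, A c1 c3 * B c2 c4)
          = (∑ c3 : Fin k, A c1 c3) * (∑ c4 : Fin k, B c2 c4) :=
        fun c1 c2 => (Finset.sum_mul_sum univ univ _ _).symm
      calc (∑ c1 : Fin k, ∑ c2 : Fin k, ∑ c3 : Fin k, ∑ c4 : Fin k, A c1 c3 * B c2 c4)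
          = ∑ c1 : Fin k, ∑ c2 : Fin k, (∑ c3 : Fin k, A c1 c3) * (∑ c4 : Fin k, B c2 c4) := by
            exact Finset.sum_congr rfl fun c1 _ => Finset.sum_congr rfl fun c2 _ => step1 c1 c2
        _ = (∑ c1 : Fin k, ∑ c3 : Fin k, A c1 c3) * (∑ c2 : Fin k, ∑ c4 : Fin k, B c2 c4) :=
            (Finset.sum_mul_sum univ univ _ _).symm
        _ = Ff s k * Ff t k := by rw [hA, hB]; rw [sumF s c0, sumF t c0]
    have hGH : ∀ d : Fin k, (∑ c3 : Fin k, A d c3) * (∑ c4 : Fin k, B d c4)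
        = if d = c0 then Gf s (k:ℝ) * Gf t (k:ℝ) else Hf s (k:ℝ) * Hf t (k:ℝ) := by
      intro d
      rw [hA, hB]
      simp only []
      rw [sumInner s c0 d, sumInner t c0 d]
      by_cases hd : d = c0 <;> simp [hd]
    have hp : (∑ c1 : Fin k, ∑ c2 : Fin k, ∑ c3 : Fin k, ∑ c4 : Fin k,
          (if c1 = c2 then A c1 c3 * B c2 c4 else 0))
        = Gf s (k:ℝ) * Gf t (k:ℝ) + ((k:ℝ)-1) * (Hf s (k:ℝ) * Hf t (k:ℝ)) := by
      calc (∑ c1 : Fin k, ∑ c2 : Fin k, ∑ c3 : Fin k, ∑ c4 : Fin k,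
              (if c1 = c2 then A c1 c3 * B c2 c4 else 0))
          = ∑ c1 : Fin k, ∑ c2 : Fin k,
              (if c1 = c2 then ∑ c3 : Fin k, ∑ c4 : Fin k, A c1 c3 * B c2 c4 else 0) := by
            simp only [sum_ite_const_s7]
        _ = ∑ c1 : Fin k, ∑ c3 : Fin k, ∑ c4 : Fin k, A c1 c3 * B c1 c4 := by
            refine Finset.sum_congr rfl fun c1 _ => ?_
            rw [Finset.sum_ite_eq univ c1 (fun c2 => ∑ c3 : Fin k, ∑ c4 : Fin k, A c1 c3 * B c2 c4)]
            simp
        _ = ∑ c1 : Fin k, (∑ c3 : Fin k, A c1 c3) * (∑ c4 : Fin k, B c1 c4) :=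
            Finset.sum_congr rfl fun c1 _ => (Finset.sum_mul_sum univ univ _ _).symm
        _ = ∑ c1 : Fin k, (if c1 = c0 then Gf s (k:ℝ) * Gf t (k:ℝ)
              else Hf s (k:ℝ) * Hf t (k:ℝ)) := Finset.sum_congr rfl fun c1 _ => hGH c1
        _ = Gf s (k:ℝ) * Gf t (k:ℝ) + ((k:ℝ)-1) * (Hf s (k:ℝ) * Hf t (k:ℝ)) :=
            sum_ite_point c0 _ _
    have hswap : ∀ c3 : Fin k, (∑ c1 : Fin k, A c1 c3) * (∑ c2 : Fin k, B c2 c3)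
        = if c3 = c0 then Gf s (k:ℝ) * Gf t (k:ℝ) else Hf s (k:ℝ) * Hf t (k:ℝ) := by
      intro c3
      have e1 : ∀ c1 : Fin k, ({c0, c1, c3} : Finset (Fin k)) = {c0, c3, c1} := by
        intro c1; rw [Finset.pair_comm c1 c3]
      have e2 : ∀ c2 : Fin k, ({c0, c2, c3} : Finset (Fin k)) = {c0, c3, c2} := by
        intro c2; rw [Finset.pair_comm c2 c3]
      rw [hA, hB]
      simp only [e1, e2]
      rw [sumInner s c0 c3, sumInner t c0 c3]
      by_cases hd : c3 = c0 <;> simp [hd]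
    have hq : (∑ c1 : Fin k, ∑ c2 : Fin k, ∑ c3 : Fin k, ∑ c4 : Fin k,
          (if c3 = c4 then A c1 c3 * B c2 c4 else 0))
        = Gf s (k:ℝ) * Gf t (k:ℝ) + ((k:ℝ)-1) * (Hf s (k:ℝ) * Hf t (k:ℝ)) := by
      calc (∑ c1 : Fin k, ∑ c2 : Fin k, ∑ c3 : Fin k, ∑ c4 : Fin k,
              (if c3 = c4 then A c1 c3 * B c2 c4 else 0))
          = ∑ c1 : Fin k, ∑ c2 : Fin k, ∑ c3 : Fin k, A c1 c3 * B c2 c3 := by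
            simp only [Finset.sum_ite_eq, mem_univ, ite_true]
        _ = ∑ c3 : Fin k, ∑ c1 : Fin k, ∑ c2 : Fin k, A c1 c3 * B c2 c3 := by
            rw [Finset.sum_congr rfl fun (c1 : Fin k) (_ : c1 ∈ univ) =>
              (Finset.sum_comm : (∑ c2 : Fin k, ∑ c3 : Fin k, A c1 c3 * B c2 c3)
                = ∑ c3 : Fin k, ∑ c2 : Fin k, A c1 c3 * B c2 c3)]
            exact Finset.sum_comm
        _ = ∑ c3 : Fin k, (∑ c1 : Fin k, A c1 c3) * (∑ c2 : Fin k, B c2 c3) :=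
            Finset.sum_congr rfl fun c3 _ => (Finset.sum_mul_sum univ univ _ _).symm
        _ = ∑ c3 : Fin k, (if c3 = c0 then Gf s (k:ℝ) * Gf t (k:ℝ)
              else Hf s (k:ℝ) * Hf t (k:ℝ)) := Finset.sum_congr rfl fun c3 _ => hswap c3
        _ = Gf s (k:ℝ) * Gf t (k:ℝ) + ((k:ℝ)-1) * (Hf s (k:ℝ) * Hf t (k:ℝ)) :=
            sum_ite_point c0 _ _
    have hpq : (∑ c1 : Fin k, ∑ c2 : Fin k, ∑ c3 : Fin k, ∑ c4 : Fin k,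
          (if c1 = c2 ∧ c3 = c4 then A c1 c3 * B c2 c4 else 0))
        = Ff (s+t) (k:ℝ) := by
      calc (∑ c1 : Fin k, ∑ c2 : Fin k, ∑ c3 : Fin k, ∑ c4 : Fin k,
              (if c1 = c2 ∧ c3 = c4 then A c1 c3 * B c2 c4 else 0))
          = ∑ c1 : Fin k, ∑ c3 : Fin k, A c1 c3 * B c1 c3 := by
            simp only [ite_and, sum_ite_const_s7, Finset.sum_ite_eq, mem_univ, ite_true]
        _ = ∑ c1 : Fin k, ∑ c3 : Fin k,
              ((k:ℝ) - (({c0,c1,c3} : Finset (Fin k)).card : ℝ))^(s+t) := by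
            refine Finset.sum_congr rfl fun c1 _ => Finset.sum_congr rfl fun c3 _ => ?_
            rw [hA, hB]
            simp only [← pow_add]
        _ = Ff (s+t) (k:ℝ) := sumF (s+t) c0
    calc (∑ c1 : Fin k, ∑ c2 : Fin k, ∑ c3 : Fin k, ∑ c4 : Fin k,
            (if c1 ≠ c2 ∧ c3 ≠ c4 then A c1 c3 * B c2 c4 else 0))
        = ∑ c1 : Fin k, ∑ c2 : Fin k, ∑ c3 : Fin k, ∑ c4 : Fin k,
            (A c1 c3 * B c2 c4 - (if c1 = c2 then A c1 c3 * B c2 c4 else 0)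
              - (if c3 = c4 then A c1 c3 * B c2 c4 else 0)
              + (if c1 = c2 ∧ c3 = c4 then A c1 c3 * B c2 c4 else 0)) := by
          simp only [ne_eq, iteIE]
      _ = Ff s k * Ff t k
            - 2*(Gf s (k:ℝ) * Gf t (k:ℝ) + ((k:ℝ)-1) * (Hf s (k:ℝ) * Hf t (k:ℝ)))
            + Ff (s+t) (k:ℝ) := by
          simp only [Finset.sum_add_distrib, Finset.sum_sub_distrib]
          rw [hall, hp, hq, hpq]
          ring
  rw [Finset.sum_congr rfl (fun c0 _ => key c0), Finset.sum_const, Finset.card_univ,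
    Fintype.card_fin, nsmul_eq_mul]
  unfold qf
  ring

/-! ### Counting proper colorings of `X(s,t)` -/

lemma proper_iff {s t k : ℕ} (f : (Fin 5 ⊕ Fin s ⊕ Fin t) → Fin k) :
    (∀ u v, (graphX s t).Adj u v → f u ≠ f v) ↔
      ((f (Sum.inl 1) ≠ f (Sum.inl 2) ∧ f (Sum.inl 3) ≠ f (Sum.inl 4)) ∧
       (∀ i : Fin s, f (Sum.inr (Sum.inl i)) ≠ f (Sum.inl 0) ∧
          f (Sum.inr (Sum.inl i)) ≠ f (Sum.inl 1) ∧ f (Sum.inr (Sum.inl i)) ≠ f (Sum.inl 3)) ∧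
       (∀ j : Fin t, f (Sum.inr (Sum.inr j)) ≠ f (Sum.inl 0) ∧
          f (Sum.inr (Sum.inr j)) ≠ f (Sum.inl 2) ∧ f (Sum.inr (Sum.inr j)) ≠ f (Sum.inl 4))) := by
  constructor
  · intro h
    have h' : ∀ u v, u ≠ v → XAdj s t u v → f u ≠ f v := fun u v hne hx =>
      h u v (by rw [graphX, SimpleGraph.fromRel_adj]; exact ⟨hne, Or.inl hx⟩)
    refine ⟨⟨h' _ _ (by simp) (Or.inl ⟨rfl, rfl⟩), h' _ _ (by simp) (Or.inr (Or.inl ⟨rfl, rfl⟩))⟩,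
      fun i => ⟨?_, ?_, ?_⟩, fun j => ⟨?_, ?_, ?_⟩⟩
    · exact h' _ _ (by simp) (Or.inr (Or.inr (Or.inl ⟨⟨i, rfl⟩, Or.inl rfl⟩)))
    · exact h' _ _ (by simp) (Or.inr (Or.inr (Or.inl ⟨⟨i, rfl⟩, Or.inr (Or.inl rfl)⟩)))
    · exact h' _ _ (by simp) (Or.inr (Or.inr (Or.inl ⟨⟨i, rfl⟩, Or.inr (Or.inr rfl)⟩)))
    · exact h' _ _ (by simp) (Or.inr (Or.inr (Or.inr ⟨⟨j, rfl⟩, Or.inl rfl⟩)))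
    · exact h' _ _ (by simp) (Or.inr (Or.inr (Or.inr ⟨⟨j, rfl⟩, Or.inr (Or.inl rfl)⟩)))
    · exact h' _ _ (by simp) (Or.inr (Or.inr (Or.inr ⟨⟨j, rfl⟩, Or.inr (Or.inr rfl)⟩)))
  · rintro ⟨⟨h12, h34⟩, hS, hT⟩ u v hadj
    rw [graphX, SimpleGraph.fromRel_adj] at hadj
    obtain ⟨-, hx | hx⟩ := hadj
    · rcases hx with ⟨rfl, rfl⟩ | ⟨rfl, rfl⟩ | ⟨⟨i, rfl⟩, rfl | rfl | rfl⟩ |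
        ⟨⟨j, rfl⟩, rfl | rfl | rfl⟩
      · exact h12
      · exact h34
      · exact (hS i).1
      · exact (hS i).2.1
      · exact (hS i).2.2
      · exact (hT j).1
      · exact (hT j).2.1
      · exact (hT j).2.2
    · rcases hx with ⟨rfl, rfl⟩ | ⟨rfl, rfl⟩ | ⟨⟨i, rfl⟩, rfl | rfl | rfl⟩ |
        ⟨⟨j, rfl⟩, rfl | rfl | rfl⟩
      · exact h12.symm
      · exact h34.symm
      · exact ((hS i).1).symm
      · exact ((hS i).2.1).symm
      · exact ((hS i).2.2).symm
      · exact ((hT j).1).symm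
      · exact ((hT j).2.1).symm
      · exact ((hT j).2.2).symm

lemma nat_ite_and (p q : Prop) [Decidable p] [Decidable q] :
    (if p ∧ q then (1:ℕ) else 0) = (if p then 1 else 0) * (if q then 1 else 0) := by
  by_cases hp : p <;> by_cases hq : q <;> simp [hp, hq]

lemma count_avoid {m k : ℕ} (S : Finset (Fin k)) :
    ∑ g : Fin m → Fin k, (if (∀ i, g i ∉ S) then (1:ℕ) else 0)
      = (k - S.card)^m := by
  classical
  rw [← Finset.card_filter]
  have e1 : univ.filter (fun g : Fin m → Fin k => ∀ i, g i ∉ S)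
      = Fintype.piFinset (fun _ => univ \ S) := by
    ext g
    simp [Fintype.mem_piFinset]
  rw [e1, Fintype.card_piFinset]
  simp [Finset.card_sdiff_of_subset (Finset.subset_univ S)]

lemma count_eq (s t k : ℕ) :
    numColorings (graphX s t) k
      = ∑ c0 : Fin k, ∑ c1 : Fin k, ∑ c2 : Fin k, ∑ c3 : Fin k, ∑ c4 : Fin k,
          (if c1 ≠ c2 ∧ c3 ≠ c4 then
            (k - ({c0,c1,c3} : Finset (Fin k)).card)^s *
            (k - ({c0,c2,c4} : Finset (Fin k)).card)^t
            else 0) := by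
  classical
  rw [numColorings, Nat.card_eq_fintype_card, Fintype.card_subtype, Finset.card_filter]
  -- reindex to triples
  let E : ((Fin 5 → Fin k) × (Fin s → Fin k) × (Fin t → Fin k))
      ≃ ((Fin 5 ⊕ Fin s ⊕ Fin t) → Fin k) :=
    ((Equiv.sumArrowEquivProdArrow (Fin 5) (Fin s ⊕ Fin t) (Fin k)).trans
      (Equiv.prodCongr (Equiv.refl _) (Equiv.sumArrowEquivProdArrow _ _ _))).symm
  rw [← Fintype.sum_equiv E
    (fun p => if (∀ u v, (graphX s t).Adj u v → E p u ≠ E p v) then (1:ℕ) else 0)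
    (fun f => if (∀ u v, (graphX s t).Adj u v → f u ≠ f v) then (1:ℕ) else 0)
    (fun p => rfl)]
  have hE : ∀ (p : (Fin 5 → Fin k) × (Fin s → Fin k) × (Fin t → Fin k)),
      E p = Sum.elim p.1 (Sum.elim p.2.1 p.2.2) := fun p => rfl
  simp only [hE, proper_iff, Sum.elim_inl, Sum.elim_inr]
  rw [Fintype.sum_prod_type]
  -- now per c : Fin 5 → Fin k
  have key : ∀ c : Fin 5 → Fin k,
      (∑ q : (Fin s → Fin k) × (Fin t → Fin k),
        (if ((c 1 ≠ c 2 ∧ c 3 ≠ c 4) ∧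
            (∀ i, q.1 i ≠ c 0 ∧ q.1 i ≠ c 1 ∧ q.1 i ≠ c 3) ∧
            (∀ j, q.2 j ≠ c 0 ∧ q.2 j ≠ c 2 ∧ q.2 j ≠ c 4)) then (1:ℕ) else 0))
      = (if c 1 ≠ c 2 ∧ c 3 ≠ c 4 then
          (k - ({c 0, c 1, c 3} : Finset (Fin k)).card)^s *
          (k - ({c 0, c 2, c 4} : Finset (Fin k)).card)^t else 0) := by
    intro c
    by_cases hA : c 1 ≠ c 2 ∧ c 3 ≠ c 4
    · rw [if_pos hA]
      have hsimp : ∀ (R : Prop) (inst : Decidable R),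
          (if (c 1 ≠ c 2 ∧ c 3 ≠ c 4) ∧ R then (1:ℕ) else 0) = if R then 1 else 0 := by
        intro R inst
        by_cases hR : R <;> simp [hR, hA]
      simp only [hsimp]
      rw [Fintype.sum_prod_type]
      calc (∑ g : Fin s → Fin k, ∑ h : Fin t → Fin k,
            (if ((∀ i, g i ≠ c 0 ∧ g i ≠ c 1 ∧ g i ≠ c 3) ∧
                (∀ j, h j ≠ c 0 ∧ h j ≠ c 2 ∧ h j ≠ c 4)) then (1:ℕ) else 0))
          = (∑ g : Fin s → Fin k, (if (∀ i, g i ≠ c 0 ∧ g i ≠ c 1 ∧ g i ≠ c 3) then (1:ℕ) else 0))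
            * (∑ h : Fin t → Fin k, (if (∀ j, h j ≠ c 0 ∧ h j ≠ c 2 ∧ h j ≠ c 4) then (1:ℕ) else 0)) := by
            rw [Finset.sum_mul_sum]
            exact Finset.sum_congr rfl fun g _ => Finset.sum_congr rfl fun h _ =>
              nat_ite_and _ _
        _ = (k - ({c 0, c 1, c 3} : Finset (Fin k)).card)^s *
            (k - ({c 0, c 2, c 4} : Finset (Fin k)).card)^t := by
            rw [show (∑ g : Fin s → Fin k,
                (if (∀ i, g i ≠ c 0 ∧ g i ≠ c 1 ∧ g i ≠ c 3) then (1:ℕ) else 0))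
              = ∑ g : Fin s → Fin k,
                (if (∀ i, g i ∉ ({c 0, c 1, c 3} : Finset (Fin k))) then (1:ℕ) else 0) by
                refine Finset.sum_congr rfl fun g _ => ?_
                congr 1
                simp [not_or]]
            rw [show (∑ h : Fin t → Fin k,
                (if (∀ j, h j ≠ c 0 ∧ h j ≠ c 2 ∧ h j ≠ c 4) then (1:ℕ) else 0))
              = ∑ h : Fin t → Fin k,
                (if (∀ j, h j ∉ ({c 0, c 2, c 4} : Finset (Fin k))) then (1:ℕ) else 0) by
                refine Finset.sum_congr rfl fun h _ => ?_
                congr 1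
                simp [not_or]]
            rw [count_avoid, count_avoid]
    · rw [if_neg hA]
      simp [hA]
  rw [Finset.sum_congr rfl fun c (_ : c ∈ univ) => key c]
  -- reindex functions Fin 5 → Fin k to quintuples
  let e5 : (Fin k × Fin k × Fin k × Fin k × Fin k) ≃ (Fin 5 → Fin k) :=
    { toFun := fun p => ![p.1, p.2.1, p.2.2.1, p.2.2.2.1, p.2.2.2.2]
      invFun := fun c => (c 0, c 1, c 2, c 3, c 4)
      left_inv := by rintro ⟨a, b, c, d, e⟩; rfl
      right_inv := by intro c; funext i; fin_cases i <;> rfl }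
  rw [← Fintype.sum_equiv e5
    (fun p : Fin k × Fin k × Fin k × Fin k × Fin k =>
      (if p.2.1 ≠ p.2.2.1 ∧ p.2.2.2.1 ≠ p.2.2.2.2 then
        (k - ({p.1, p.2.1, p.2.2.2.1} : Finset (Fin k)).card)^s *
        (k - ({p.1, p.2.2.1, p.2.2.2.2} : Finset (Fin k)).card)^t else 0))
    _ (fun p => by simp [e5]; congr)]
  simp only [Fintype.sum_prod_type]

lemma count_eq_real (s t k : ℕ) :
    ((numColorings (graphX s t) k : ℕ) : ℝ) = qf s t (k:ℝ) := by
  rw [count_eq, ← mainSum s t k]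
  push_cast
  refine Finset.sum_congr rfl fun c0 _ => Finset.sum_congr rfl fun c1 _ =>
    Finset.sum_congr rfl fun c2 _ => Finset.sum_congr rfl fun c3 _ =>
    Finset.sum_congr rfl fun c4 _ => ?_
  have ha : ({c0,c1,c3} : Finset (Fin k)).card ≤ k := by
    simpa using Finset.card_le_univ ({c0,c1,c3} : Finset (Fin k))
  have hb : ({c0,c2,c4} : Finset (Fin k)).card ≤ k := by
    simpa using Finset.card_le_univ ({c0,c2,c4} : Finset (Fin k))
  split
  · rw [Nat.cast_sub ha, Nat.cast_sub hb]
  · rfl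

/-- For all odd `s, t ≥ 3`, there exists `α > 0` such that the chromatic polynomial of
`X(s,t)` is strictly negative on the interval `(1, 1 + α)`. -/
theorem chromaticPolynomial_graphX_neg_right_of_one (s t : ℕ) (hs : 3 ≤ s) (ht : 3 ≤ t)
    (hsodd : Odd s) (htodd : Odd t)
    (P : Polynomial ℝ) (hP : IsChromaticPolynomial (graphX s t) P) :
    ∃ α : ℝ, 0 < α ∧ ∀ x : ℝ, 1 < x → x < 1 + α → P.eval x < 0 := by
  have hPeval : ∀ x : ℝ, P.eval x = qf s t x := by
    have hPQ : P = Qp s t := by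
      apply Polynomial.eq_of_infinite_eval_eq
      apply Set.infinite_of_injective_forall_mem
        (f := fun k : ℕ => (k:ℝ)) Nat.cast_injective
      intro k
      simp only [Set.mem_setOf_eq]
      rw [hP k, Qp_eval, count_eq_real]
    intro x
    rw [hPQ, Qp_eval]
  obtain ⟨a, hEa, ha2, hsa⟩ : ∃ a, Even a ∧ 2 ≤ a ∧ s = a + 1 := by
    obtain ⟨m, hm⟩ := hsodd
    exact ⟨2*m, even_two_mul m, by omega, by omega⟩
  obtain ⟨b, hEb, hb2, htb⟩ : ∃ b, Even b ∧ 2 ≤ b ∧ t = b + 1 := by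
    obtain ⟨n, hn⟩ := htodd
    exact ⟨2*n, even_two_mul n, by omega, by omega⟩
  subst hsa htb
  have hr1 : rf a b 1 < 0 := rf_one_neg a b hEa hEb ha2 hb2
  have hev : ∀ᶠ x in nhds (1:ℝ), rf a b x < 0 :=
    ((rf_cont a b).tendsto 1).eventually_lt_const hr1
  rw [Metric.eventually_nhds_iff] at hev
  obtain ⟨ε, hε, hball⟩ := hev
  refine ⟨ε, hε, fun x hx1 hx2 => ?_⟩
  have hrx : rf a b x < 0 := by
    apply hball
    rw [Real.dist_eq, abs_of_pos (by linarith : (0:ℝ) < x - 1)]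
    linarith
  have hx0 : 0 < x * (x - 1) := mul_pos (by linarith) (by linarith)
  calc P.eval x = qf (a+1) (b+1) x := hPeval x
    _ = x * (x-1) * rf a b x := qf_factor a b x
    _ < 0 := mul_neg_of_pos_of_neg hx0 hrx
end
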